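/- arXiv:2407.17168 — 5 statements merged into one kernel-verified Lean document; each statement's English description precedes it below -/
import Mathlib

section
/- The number of r-Dyck paths from (0,0) to (rn,n) that never go below the line y = x/r equals the Fuss–Catalan number (1/(rn+1)) * binomial((r+1)n, n). -/
open Finset

open scoped Classical in
/-- An `r`-Dyck path of length `n`, encoded as a word `w` of length `(r+1)*n` in the
alphabet `Bool`, where `false` denotes an up step `(0,1)` and `true` denotes a right
step `(1,0)`.  The path goes from `(0,0)` to `(r*n, n)` (it has `n` up steps and
`r*n` right steps) and never goes strictly below the line `y = x/r`, i.e. every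
prefix contains at most `r` times as many right steps as up steps. -/
def IsRDyck (r n : ℕ) (w : Fin ((r + 1) * n) → Bool) : Prop :=
  (univ.filter (fun i => w i = false)).card = n ∧
  ∀ k : ℕ,
    (univ.filter (fun i : Fin ((r + 1) * n) => (i : ℕ) < k ∧ w i = true)).card ≤
      r * (univ.filter (fun i : Fin ((r + 1) * n) => (i : ℕ) < k ∧ w i = false)).card

namespace RDyckAux

/-- value of a step: right step `true` is `-1`, up step `false` is `r`. -/
def bval (r : ℕ) (b : Bool) : ℤ := if b then -1 else (r : ℤ)

/-- partial sum of values of the first `k` letters of `W`. -/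
def psum (r : ℕ) (W : ℕ → Bool) (k : ℕ) : ℤ := ∑ i ∈ Finset.range k, bval r (W i)

/-- number of letters equal to `b` among first `k` letters. -/
def cnt (b : Bool) (W : ℕ → Bool) (k : ℕ) : ℕ :=
  ((Finset.range k).filter (fun i => W i = b)).card

@[simp] lemma psum_zero (r : ℕ) (W : ℕ → Bool) : psum r W 0 = 0 := by simp [psum]

lemma psum_succ (r : ℕ) (W : ℕ → Bool) (k : ℕ) :
    psum r W (k + 1) = psum r W k + bval r (W k) := by
  simp [psum, Finset.sum_range_succ]

@[simp] lemma cnt_zero (b : Bool) (W : ℕ → Bool) : cnt b W 0 = 0 := by simp [cnt]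

lemma cnt_succ (b : Bool) (W : ℕ → Bool) (k : ℕ) :
    cnt b W (k + 1) = cnt b W k + if W k = b then 1 else 0 := by
  unfold cnt
  rw [Finset.range_add_one, Finset.filter_insert]
  split
  · rw [Finset.card_insert_of_notMem (by simp)]
  · simp

lemma cnt_add_cnt (W : ℕ → Bool) (k : ℕ) : cnt false W k + cnt true W k = k := by
  induction k with
  | zero => simp
  | succ k ih =>
    rw [cnt_succ, cnt_succ]
    cases hW : W k <;> simp <;> omega

lemma psum_eq (r : ℕ) (W : ℕ → Bool) (k : ℕ) :
    psum r W k = (r : ℤ) * cnt false W k - cnt true W k := by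
  induction k with
  | zero => simp
  | succ k ih =>
    rw [psum_succ, cnt_succ, cnt_succ, ih]
    cases hW : W k <;> simp [bval] <;> push_cast <;> ring

lemma cnt_false_key (r : ℕ) (W : ℕ → Bool) (k : ℕ) :
    ((r : ℤ) + 1) * cnt false W k = psum r W k + k := by
  have h1 := psum_eq r W k
  have h2 : ((cnt false W k : ℤ)) + (cnt true W k : ℤ) = k := by
    exact_mod_cast cnt_add_cnt W k
  linear_combination h2 - h1

lemma psum_nonneg_iff (r : ℕ) (W : ℕ → Bool) (k : ℕ) :
    0 ≤ psum r W k ↔ cnt true W k ≤ r * cnt false W k := by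
  rw [psum_eq, sub_nonneg]
  constructor <;> intro h <;> exact_mod_cast h

lemma psum_congr (r : ℕ) {W W' : ℕ → Bool} (k : ℕ) (h : ∀ i < k, W i = W' i) :
    psum r W k = psum r W' k := by
  unfold psum
  exact Finset.sum_congr rfl (fun i hi => by rw [h i (Finset.mem_range.1 hi)])

lemma cnt_congr (b : Bool) {W W' : ℕ → Bool} (k : ℕ) (h : ∀ i < k, W i = W' i) :
    cnt b W k = cnt b W' k := by
  unfold cnt
  congr 1
  exact Finset.filter_congr (fun i hi => by rw [h i (Finset.mem_range.1 hi)])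

lemma psum_rot (r : ℕ) (W : ℕ → Bool) (t k : ℕ) :
    psum r (fun i => W (t + i)) k = psum r W (t + k) - psum r W t := by
  induction k with
  | zero => simp
  | succ k ih =>
    rw [psum_succ, ih, ← Nat.add_assoc, psum_succ]
    ring

lemma psum_period (r N : ℕ) (W : ℕ → Bool) (hper : ∀ i, W (i + N) = W i) (k : ℕ) :
    psum r W (k + N) = psum r W k + psum r W N := by
  induction k with
  | zero => simp
  | succ k ih =>
    have : k + 1 + N = (k + N) + 1 := by omega
    rw [this, psum_succ, ih, hper k, psum_succ]
    ring

/-- `t` is a good rotation point. -/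
def good (r N : ℕ) (W : ℕ → Bool) (t : ℕ) : Prop :=
  ∀ k, 1 ≤ k → k < N → psum r W t ≤ psum r W (t + k)

lemma good_min {r N : ℕ} {W : ℕ → Bool} (hper : ∀ i, W (i + N) = W i)
    (hsum : psum r W N = -1) {t : ℕ} (ht : t < N) (hg : good r N W t) :
    (∀ j < N, psum r W t ≤ psum r W j) ∧ (∀ j < t, psum r W t < psum r W j) := by
  have key : ∀ j < t, psum r W t < psum r W j := by
    intro j hj
    have h1 : t + (j + N - t) = j + N := by omega
    have h2 := hg (j + N - t) (by omega) (by omega)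
    rw [h1, psum_period r N W hper j, hsum] at h2
    linarith
  refine ⟨fun j hj => ?_, key⟩
  rcases lt_trichotomy j t with h | h | h
  · exact le_of_lt (key j h)
  · rw [h]
  · have := hg (j - t) (by omega) (by omega)
    rwa [Nat.add_sub_cancel' (le_of_lt h)] at this

lemma good_unique {r N : ℕ} {W : ℕ → Bool} (hper : ∀ i, W (i + N) = W i)
    (hsum : psum r W N = -1) {t t' : ℕ} (ht : t < N) (ht' : t' < N)
    (hg : good r N W t) (hg' : good r N W t') : t = t' := by
  obtain ⟨h1, h2⟩ := good_min hper hsum ht hg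
  obtain ⟨h1', h2'⟩ := good_min hper hsum ht' hg'
  by_contra hne
  rcases lt_or_gt_of_ne hne with h | h
  · exact absurd (h1 t' ht') (not_le.2 (h2' t h))
  · exact absurd (h1' t ht) (not_le.2 (h2 t' h))

lemma harith' : ∀ a b c : ℕ, a < c → 1 ≤ b → b < c → ¬ a + b < c →
    a + b - c < a ∧ a + b - c < c ∧ a + b = (a + b - c) + c := by
  intro a b c h0 h1 h2 h3
  omega

open scoped Classical in
lemma good_exists {r N : ℕ} {W : ℕ → Bool} (hN : 0 < N) (hper : ∀ i, W (i + N) = W i)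
    (hsum : psum r W N = -1) : ∃ t < N, good r N W t := by
  obtain ⟨t₀, ht₀, hmin⟩ := Finset.exists_min_image (Finset.range N) (psum r W)
    ⟨0, Finset.mem_range.2 hN⟩
  have hex : ∃ t, t < N ∧ ∀ j < N, psum r W t ≤ psum r W j :=
    ⟨t₀, Finset.mem_range.1 ht₀, fun j hj => hmin j (Finset.mem_range.2 hj)⟩
  obtain ⟨hTN, hTmin⟩ := Nat.find_spec hex
  refine ⟨Nat.find hex, hTN, fun k hk1 hkN => ?_⟩
  by_cases h : Nat.find hex + k < N
  · exact hTmin _ h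
  · obtain ⟨hs, hsN, h5⟩ := harith' _ _ _ hTN hk1 hkN h
    have hne := Nat.find_min hex hs
    push_neg at hne
    obtain ⟨j, hj, hjlt⟩ := hne hsN
    have h3 : psum r W (Nat.find hex) ≤ psum r W j := hTmin j hj
    have h4 : psum r W (Nat.find hex) < psum r W (Nat.find hex + k - N) :=
      lt_of_le_of_lt h3 hjlt
    rw [h5, psum_period r N W hper, hsum]
    linarith

lemma last_true {r N : ℕ} {W : ℕ → Bool} (hN : 0 < N) (hper : ∀ i, W (i + N) = W i)
    (hsum : psum r W N = -1) {t : ℕ} (hg : good r N W t) :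
    W (t + (N - 1)) = true := by
  have h1 : psum r W (t + N) = psum r W t + -1 := by
    rw [psum_period r N W hper, hsum]
  have h2 : t + N = (t + (N - 1)) + 1 := by omega
  rw [h2, psum_succ] at h1
  have h3 : psum r W t ≤ psum r W (t + (N - 1)) := by
    rcases Nat.eq_or_lt_of_le hN with h | h
    · simp [← h]
    · exact hg (N - 1) (by omega) (by omega)
  cases hb : W (t + (N - 1))
  · rw [hb] at h1
    simp [bval] at h1
    have : (0 : ℤ) ≤ (r : ℤ) := Int.natCast_nonneg r
    linarith
  · rfl


/-- the padded extension of a finite word by `true`s. -/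
def Qw (M : ℕ) (d : Fin M → Bool) : ℕ → Bool := fun i => if h : i < M then d ⟨i, h⟩ else true

/-- the periodic extension of a finite word. -/
def Pw (M : ℕ) [NeZero M] (w : Fin M → Bool) : ℕ → Bool :=
  fun i => w ⟨i % M, Nat.mod_lt _ (Nat.pos_of_ne_zero (NeZero.ne M))⟩

lemma Pw_period (M : ℕ) [NeZero M] (w : Fin M → Bool) (i : ℕ) : Pw M w (i + M) = Pw M w i := by
  simp [Pw, Nat.add_mod_right]

lemma Pw_eq (M : ℕ) [NeZero M] (w : Fin M → Bool) (i : Fin M) : Pw M w i = w i := by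
  simp [Pw, Nat.mod_eq_of_lt i.isLt]

lemma Qw_eq (M : ℕ) (d : Fin M → Bool) (i : Fin M) : Qw M d i = d i := by
  simp [Qw, i.isLt]

open scoped Classical in
lemma card_filter_lt (M k : ℕ) (hk : k ≤ M) (w : Fin M → Bool) (V : ℕ → Bool)
    (hV : ∀ i : Fin M, V i = w i) (b : Bool) :
    (univ.filter fun i : Fin M => (i : ℕ) < k ∧ w i = b).card = cnt b V k := by
  unfold cnt
  refine Finset.card_bij (fun i _ => (i : ℕ)) ?_ ?_ ?_
  · intro i hi
    simp only [Finset.mem_filter, Finset.mem_univ, true_and] at hi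
    simp only [Finset.mem_filter, Finset.mem_range]
    exact ⟨hi.1, by rw [hV i]; exact hi.2⟩
  · intro i _ j _ hij
    exact Fin.ext hij
  · intro j hj
    simp only [Finset.mem_filter, Finset.mem_range] at hj
    refine ⟨⟨j, lt_of_lt_of_le hj.1 hk⟩, ?_, rfl⟩
    simp only [Finset.mem_filter, Finset.mem_univ, true_and]
    exact ⟨hj.1, by rw [← hV ⟨j, lt_of_lt_of_le hj.1 hk⟩]; exact hj.2⟩

open scoped Classical in
lemma card_filter_full (M : ℕ) (w : Fin M → Bool) (V : ℕ → Bool)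
    (hV : ∀ i : Fin M, V i = w i) (b : Bool) :
    (univ.filter fun i : Fin M => w i = b).card = cnt b V M := by
  rw [← card_filter_lt M M le_rfl w V hV b]
  congr 1
  apply Finset.filter_congr
  intro i _
  simp [i.isLt]

open scoped Classical in
lemma isRDyck_iff (r n : ℕ) (d : Fin ((r + 1) * n) → Bool) :
    IsRDyck r n d ↔ (cnt false (Qw _ d) ((r + 1) * n) = n ∧
      ∀ k ≤ (r + 1) * n, 0 ≤ psum r (Qw _ d) k) := by
  have hV : ∀ i : Fin ((r + 1) * n), Qw _ d i = d i := Qw_eq _ d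
  constructor
  · rintro ⟨h1, h2⟩
    constructor
    · rw [← card_filter_full _ d _ hV false]; exact h1
    · intro k hk
      rw [psum_nonneg_iff, ← card_filter_lt _ k hk d _ hV true,
        ← card_filter_lt _ k hk d _ hV false]
      exact h2 k
  · rintro ⟨h1, h2⟩
    constructor
    · rw [← card_filter_full _ d _ hV false] at h1; exact h1
    · intro k
      by_cases hk : k ≤ (r + 1) * n
      · rw [card_filter_lt _ k hk d _ hV true, card_filter_lt _ k hk d _ hV false,
          ← psum_nonneg_iff]
        exact h2 k hk
      · have he : ∀ b : Bool,
            (univ.filter fun i : Fin ((r + 1) * n) => (i : ℕ) < k ∧ d i = b) =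
            (univ.filter fun i : Fin ((r + 1) * n) => (i : ℕ) < (r + 1) * n ∧ d i = b) := by
          intro b
          apply Finset.filter_congr
          intro i _
          have : (i : ℕ) < k := lt_of_lt_of_le i.isLt (le_of_not_ge hk)
          simp [this, i.isLt]
        rw [he true, he false,
          card_filter_lt _ _ le_rfl d _ hV true, card_filter_lt _ _ le_rfl d _ hV false,
          ← psum_nonneg_iff]
        exact h2 _ le_rfl

/-! ### The rotation maps -/

/-- rotate `w` by `t` and keep the first `L` letters. -/
def Fword (L : ℕ) (w : Fin (L + 1) → Bool) (t : Fin (L + 1)) : Fin L → Bool :=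
  fun i => w (t + Fin.castLE (Nat.le_succ L) i)

/-- pad `d` with a final `true` and rotate back by `t`. -/
def Gword (L : ℕ) (d : Fin L → Bool) (t : Fin (L + 1)) : Fin (L + 1) → Bool :=
  fun j => Qw L d ((j - t : Fin (L + 1)) : ℕ)

lemma F1 {L : ℕ} (w : Fin (L + 1) → Bool) (t : Fin (L + 1)) {i : ℕ} (hi : i < L) :
    Qw L (Fword L w t) i = Pw (L + 1) w (t.val + i) := by
  simp only [Qw, dif_pos hi, Fword, Pw]
  exact congrArg w (Fin.ext (by simp [Fin.add_def]))

lemma G1 {L : ℕ} (d : Fin L → Bool) (t : Fin (L + 1)) (i : ℕ) :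
    Pw (L + 1) (Gword L d t) (t.val + i) = Qw L d (i % (L + 1)) := by
  simp only [Pw, Gword, Fin.sub_def]
  have h1 : (L + 1 - t.val + (t.val + i) % (L + 1)) % (L + 1)
      = (L + 1 - t.val + (t.val + i)) % (L + 1) := Nat.add_mod_mod _ _ _
  have h2 : L + 1 - t.val + (t.val + i) = i + (L + 1) := by
    have := t.isLt; omega
  congr 1
  rw [h1, h2, Nat.add_mod_right]

lemma FG {L : ℕ} (d : Fin L → Bool) (t : Fin (L + 1)) : Fword L (Gword L d t) t = d := by
  funext i
  show Qw L d (((t + Fin.castLE (Nat.le_succ L) i) - t : Fin (L + 1)) : ℕ) = d i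
  rw [add_sub_cancel_left]
  simp [Qw, i.isLt]

lemma GF {L : ℕ} (w : Fin (L + 1) → Bool) (t : Fin (L + 1))
    (hlast : Pw (L + 1) w (t.val + L) = true) : Gword L (Fword L w t) t = w := by
  funext j
  have h3 : t + (j - t) = j := by abel
  show Qw L (Fword L w t) ((j - t : Fin (L + 1)) : ℕ) = w j
  by_cases h : ((j - t : Fin (L + 1)) : ℕ) < L
  · have e1 : Qw L (Fword L w t) ((j - t : Fin (L + 1)) : ℕ)
        = w (t + Fin.castLE (Nat.le_succ L) ⟨((j - t : Fin (L + 1)) : ℕ), h⟩) := by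
      simp only [Qw]
      rw [dif_pos h]
      rfl
    have e2 : Fin.castLE (Nat.le_succ L) ⟨((j - t : Fin (L + 1)) : ℕ), h⟩ = j - t :=
      Fin.ext (by simp)
    rw [e1, e2, h3]
  · have hL : ((j - t : Fin (L + 1)) : ℕ) = L := by
      have := (j - t : Fin (L + 1)).isLt; omega
    have h1 : Qw L (Fword L w t) ((j - t : Fin (L + 1)) : ℕ) = true := by
      simp [Qw, hL]
    have h2 : Pw (L + 1) w (t.val + ((j - t : Fin (L + 1)) : ℕ)) = w j := by
      show w _ = w j
      apply congrArg w
      apply Fin.ext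
      show (t.val + ((j - t : Fin (L + 1)) : ℕ)) % (L + 1) = (j : ℕ)
      rw [← Fin.val_add, h3]
    rw [hL] at h2
    rw [h1, ← h2, hlast]

open scoped Classical in
lemma card_words (M k : ℕ) :
    ((univ : Finset (Fin M → Bool)).filter
      (fun w => (univ.filter fun i => w i = false).card = k)).card = Nat.choose M k := by
  have base : (Finset.powersetCard k (univ : Finset (Fin M))).card = Nat.choose M k := by
    rw [Finset.card_powersetCard, Finset.card_univ, Fintype.card_fin]
  rw [← base]
  have key : ∀ s : Finset (Fin M),
      (univ.filter fun i => (if i ∈ s then false else true) = false) = s := by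
    intro s
    ext i
    simp only [Finset.mem_filter, Finset.mem_univ, true_and]
    by_cases h : i ∈ s <;> simp [h]
  refine Finset.card_bij' (fun w _ => univ.filter fun i => w i = false)
    (fun s _ => fun i => if i ∈ s then false else true) ?_ ?_ ?_ ?_
  · intro w hw
    simp only [Finset.mem_filter, Finset.mem_univ, true_and] at hw
    exact Finset.mem_powersetCard_univ.2 hw
  · intro s hs
    simp only [Finset.mem_filter, Finset.mem_univ, true_and]
    rw [key s]
    exact Finset.mem_powersetCard_univ.1 hs
  · intro w _
    funext i
    by_cases h : w i = false
    · simp [h]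
    · rw [Bool.not_eq_false] at h
      simp [h]
  · intro s _
    exact key s

lemma cnt_false_eq_of_psum (r : ℕ) (W : ℕ → Bool) {m k : ℕ}
    (h : psum r W k = ((r : ℤ) + 1) * m - k) : cnt false W k = m := by
  have h2 := cnt_false_key r W k
  have h3 : ((r : ℤ) + 1) * cnt false W k = ((r : ℤ) + 1) * m := by
    rw [h2, h]; ring
  have h4 : ((r : ℤ) + 1) ≠ 0 := by positivity
  exact_mod_cast mul_left_cancel₀ h4 h3

open scoped Classical in
lemma psum_Pw_neg_one (r n : ℕ) (w : Fin ((r + 1) * n + 1) → Bool)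
    (hw : (univ.filter fun i => w i = false).card = n) :
    psum r (Pw ((r + 1) * n + 1) w) ((r + 1) * n + 1) = -1 := by
  have h1 := card_filter_full ((r + 1) * n + 1) w _ (Pw_eq _ w) false
  rw [hw] at h1
  have h2 := cnt_false_key r (Pw ((r + 1) * n + 1) w) ((r + 1) * n + 1)
  rw [← h1] at h2
  push_cast at h2
  linarith

open scoped Classical in
/-- the set of marked words. -/
noncomputable def Pset (r n : ℕ) :
    Finset ((Fin ((r + 1) * n + 1) → Bool) × Fin ((r + 1) * n + 1)) :=
  univ.filter fun p => (univ.filter fun i => p.1 i = false).card = n ∧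
    good r ((r + 1) * n + 1) (Pw ((r + 1) * n + 1) p.1) p.2.val

open scoped Classical in
lemma cardP_eq_choose (r n : ℕ) :
    (Pset r n).card = Nat.choose ((r + 1) * n + 1) n := by
  rw [← card_words ((r + 1) * n + 1) n]
  refine Finset.card_bij (fun p _ => p.1) ?_ ?_ ?_
  · intro p hp
    simp only [Pset, Finset.mem_filter, Finset.mem_univ, true_and] at hp
    simp only [Finset.mem_filter, Finset.mem_univ, true_and]
    exact hp.1
  · rintro ⟨w, t⟩ hp ⟨w', t'⟩ hp' (h : w = w')
    subst h
    simp only [Pset, Finset.mem_filter, Finset.mem_univ, true_and] at hp hp'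
    have hsum := psum_Pw_neg_one r n w hp.1
    have := good_unique (Pw_period _ w) hsum t.isLt t'.isLt hp.2 hp'.2
    exact Prod.ext rfl (Fin.ext this)
  · intro w hw
    simp only [Finset.mem_filter, Finset.mem_univ, true_and] at hw
    have hsum := psum_Pw_neg_one r n w hw
    obtain ⟨t, ht, hg⟩ := good_exists (Nat.succ_pos _) (Pw_period _ w) hsum
    refine ⟨(w, ⟨t, ht⟩), ?_, rfl⟩
    simp only [Pset, Finset.mem_filter, Finset.mem_univ, true_and]
    exact ⟨hw, hg⟩

open scoped Classical in
lemma cardP_eq_D (r n : ℕ) :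
    (Pset r n).card =
      ((univ : Finset (Fin ((r + 1) * n) → Bool)).filter
        (fun d => IsRDyck r n d)).card * ((r + 1) * n + 1) := by
  have hcard : (((univ : Finset (Fin ((r + 1) * n) → Bool)).filter (fun d => IsRDyck r n d))
      ×ˢ (univ : Finset (Fin ((r + 1) * n + 1)))).card
      = ((univ : Finset (Fin ((r + 1) * n) → Bool)).filter
        (fun d => IsRDyck r n d)).card * ((r + 1) * n + 1) := by
    rw [Finset.card_product, Finset.card_univ, Fintype.card_fin]
  rw [← hcard]
  refine Finset.card_nbij' (fun p => (Fword ((r + 1) * n) p.1 p.2, p.2))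
    (fun q => (Gword ((r + 1) * n) q.1 q.2, q.2)) ?_ ?_ ?_ ?_
  -- forward membership
  · rintro ⟨w, t⟩ hp
    simp only [Finset.mem_coe, Pset, Finset.mem_filter, Finset.mem_univ, true_and] at hp
    obtain ⟨hw, hg⟩ := hp
    have hsum := psum_Pw_neg_one r n w hw
    have hlast : Pw ((r + 1) * n + 1) w (t.val + (r + 1) * n) = true := by
      have := last_true (Nat.succ_pos _) (Pw_period _ w) hsum hg
      simpa using this
    have hagree : ∀ i < (r + 1) * n + 1,
        Qw ((r + 1) * n) (Fword ((r + 1) * n) w t) i = Pw ((r + 1) * n + 1) w (t.val + i) := by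
      intro i hi
      by_cases hiL : i < (r + 1) * n
      · exact F1 w t hiL
      · have : i = (r + 1) * n := by omega
        subst this
        rw [hlast]
        simp [Qw]
    simp only [Finset.mem_coe, Finset.mem_product, Finset.mem_filter, Finset.mem_univ, true_and, and_true]
    rw [isRDyck_iff]
    constructor
    · have e0 : cnt false (Qw ((r + 1) * n) (Fword ((r + 1) * n) w t)) ((r + 1) * n + 1)
          = cnt false (fun i => Pw ((r + 1) * n + 1) w (t.val + i)) ((r + 1) * n + 1) :=
        cnt_congr _ _ hagree
      have e1 : psum r (fun i => Pw ((r + 1) * n + 1) w (t.val + i)) ((r + 1) * n + 1) = -1 := by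
        rw [psum_rot, psum_period r ((r + 1) * n + 1) _ (Pw_period _ w), hsum]
        ring
      have e2 : cnt false (fun i => Pw ((r + 1) * n + 1) w (t.val + i)) ((r + 1) * n + 1) = n := by
        apply cnt_false_eq_of_psum r _ (m := n)
        rw [e1]; push_cast; ring
      have e3 : Qw ((r + 1) * n) (Fword ((r + 1) * n) w t) ((r + 1) * n) = true := by
        simp [Qw]
      have e4 := cnt_succ false (Qw ((r + 1) * n) (Fword ((r + 1) * n) w t)) ((r + 1) * n)
      rw [e3] at e4
      simp only [if_neg (by simp : ¬(true = false))] at e4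
      omega
    · intro k hk
      rcases Nat.eq_zero_or_pos k with h0 | h1
      · subst h0; simp
      · have e5 : psum r (Qw ((r + 1) * n) (Fword ((r + 1) * n) w t)) k
            = psum r (fun i => Pw ((r + 1) * n + 1) w (t.val + i)) k :=
          psum_congr _ _ (fun i hi => hagree i (by omega))
        rw [e5, psum_rot]
        have := hg k h1 (by omega)
        linarith
  -- backward membership
  · rintro ⟨d, t⟩ hq
    simp only [Finset.mem_coe, Finset.mem_product, Finset.mem_filter, Finset.mem_univ, true_and, and_true] at hq
    rw [isRDyck_iff] at hq
    obtain ⟨hc, hp⟩ := hq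
    have hQL : psum r (Qw ((r + 1) * n) d) ((r + 1) * n) = 0 := by
      have h6 := cnt_false_key r (Qw ((r + 1) * n) d) ((r + 1) * n)
      rw [hc] at h6
      push_cast at h6 ⊢
      linarith
    have hQN : psum r (Qw ((r + 1) * n) d) ((r + 1) * n + 1) = -1 := by
      rw [psum_succ, hQL]
      simp [Qw, bval]
    have hrot : ∀ k ≤ (r + 1) * n + 1,
        psum r (fun i => Pw ((r + 1) * n + 1) (Gword ((r + 1) * n) d t) (t.val + i)) k
          = psum r (Qw ((r + 1) * n) d) k := by
      intro k hk
      apply psum_congr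
      intro i hi
      rw [G1, Nat.mod_eq_of_lt (by omega)]
    have hwN : psum r (Pw ((r + 1) * n + 1) (Gword ((r + 1) * n) d t)) ((r + 1) * n + 1) = -1 := by
      have h5 := psum_rot r (Pw ((r + 1) * n + 1) (Gword ((r + 1) * n) d t)) t.val ((r + 1) * n + 1)
      rw [hrot _ le_rfl, hQN,
        psum_period r ((r + 1) * n + 1) _ (Pw_period _ (Gword ((r + 1) * n) d t))] at h5
      linarith
    simp only [Finset.mem_coe, Pset, Finset.mem_filter, Finset.mem_univ, true_and]
    constructor
    · have e7 : cnt false (Pw ((r + 1) * n + 1) (Gword ((r + 1) * n) d t)) ((r + 1) * n + 1)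
          = n := by
        apply cnt_false_eq_of_psum r _ (m := n)
        rw [hwN]; push_cast; ring
      rw [card_filter_full _ _ _ (Pw_eq _ _) false, e7]
    · intro k hk1 hkN
      have h8 := psum_rot r (Pw ((r + 1) * n + 1) (Gword ((r + 1) * n) d t)) t.val k
      rw [hrot k (by omega)] at h8
      have h9 := hp k (by omega)
      linarith
  -- left inverse
  · rintro ⟨w, t⟩ hp
    simp only [Finset.mem_coe, Pset, Finset.mem_filter, Finset.mem_univ, true_and] at hp
    obtain ⟨hw, hg⟩ := hp
    have hsum := psum_Pw_neg_one r n w hw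
    have hlast : Pw ((r + 1) * n + 1) w (t.val + (r + 1) * n) = true := by
      have := last_true (Nat.succ_pos _) (Pw_period _ w) hsum hg
      simpa using this
    exact Prod.ext (GF w t hlast) rfl
  -- right inverse
  · rintro ⟨d, t⟩ _
    exact Prod.ext (FG d t) rfl

lemma choose_identity (r n : ℕ) :
    ((r + 1) * n + 1) * Nat.choose ((r + 1) * n) n
      = (r * n + 1) * Nat.choose ((r + 1) * n + 1) n := by
  have h1 := Nat.add_one_mul_choose_eq ((r + 1) * n) n
  have h2 := Nat.choose_succ_right_eq ((r + 1) * n + 1) n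
  have h3 : (r + 1) * n + 1 - n = r * n + 1 := by
    have : (r + 1) * n = r * n + n := by ring
    omega
  rw [h3] at h2
  rw [h1, h2]
  ring

end RDyckAux

open RDyckAux in
open scoped Classical in
/-- The number of `r`-Dyck paths from `(0,0)` to `(rn, n)` staying weakly above
`y = x/r` is the Fuss–Catalan number `(1/(rn+1)) * binom((r+1)n, n)`. -/
theorem rDyck_card_fussCatalan (r n : ℕ) (hr : 1 ≤ r) :
    (r * n + 1) * (univ.filter (fun w : Fin ((r + 1) * n) → Bool => IsRDyck r n w)).card =
      Nat.choose ((r + 1) * n) n := by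
  have key : ((univ : Finset (Fin ((r + 1) * n) → Bool)).filter
      (fun d => IsRDyck r n d)).card * ((r + 1) * n + 1)
      = Nat.choose ((r + 1) * n + 1) n := by
    rw [← cardP_eq_D r n, cardP_eq_choose r n]
  have hpos : 0 < (r + 1) * n + 1 := Nat.succ_pos _
  apply Nat.eq_of_mul_eq_mul_left hpos
  calc ((r + 1) * n + 1) * ((r * n + 1) *
        (univ.filter (fun w : Fin ((r + 1) * n) → Bool => IsRDyck r n w)).card)
      = (r * n + 1) * ((univ.filter (fun w : Fin ((r + 1) * n) → Bool => IsRDyck r n w)).card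
          * ((r + 1) * n + 1)) := by ring
    _ = (r * n + 1) * Nat.choose ((r + 1) * n + 1) n := by rw [key]
    _ = ((r + 1) * n + 1) * Nat.choose ((r + 1) * n) n := (choose_identity r n).symm
end

section
/- The number of r-Stirling permutations of size n equals the product over s from 1 to n-1 of (sr+1). -/
open Finset

open scoped Classical in
/-- An `r`-Stirling permutation of size `n`, encoded as a word `w` of length `r*n`
with letters in `Fin n` (the letter `v` standing for the integer `v+1`): every letter
occurs exactly `r` times, and every letter lying between two occurrences of a letter
`j` is at least `j` (i.e. if an integer `i` appears between two occurrences of `j`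
then `i > j`, for `i ≠ j`). -/
def IsStirling (r n : ℕ) (w : Fin (r * n) → Fin n) : Prop :=
  (∀ v : Fin n, (univ.filter (fun i => w i = v)).card = r) ∧
  (∀ a b c : Fin (r * n), a < b → b < c → w a = w c → w a ≤ w b)

open scoped Classical

namespace StirlingAux

variable (r n : ℕ)

lemma rsucc : r * (n+1) = r * n + r := by ring

/-- index lift -/
def lix (p i : ℕ) : ℕ := if i < p then i else i + r

/-- insertion of a block of `r` copies of the maximal letter at gap `p` -/
def ins (p : Fin (r*n+1)) (w : Fin (r*n) → Fin n) : Fin (r*(n+1)) → Fin (n+1) :=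
  fun i =>
    if h : (i:ℕ) < (p:ℕ) then
      (w ⟨i, lt_of_lt_of_le h (Nat.lt_succ_iff.mp p.isLt)⟩).castSucc
    else if h2 : (i:ℕ) < (p:ℕ) + r then Fin.last n
    else (w ⟨(i:ℕ) - r, by
      have hi := i.isLt
      have hs := rsucc r n
      have hp := p.isLt
      omega⟩).castSucc

/-- deletion of the block of maximal letters, assumed to start at `p` -/
def del (p : ℕ) (w' : Fin (r*(n+1)) → Fin (n+1)) : Fin (r*n) → Fin n :=
  fun i =>
    have hn : 0 < n := Nat.pos_of_ne_zero (fun h => by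
      have := i.isLt; subst h; simp at this)
    have hs := rsucc r n
    have hi := i.isLt
    ⟨((w' ⟨lix r p i, by unfold lix; split <;> omega⟩ : Fin (n+1)) : ℕ) % n,
      Nat.mod_lt _ hn⟩

/-- the start of the block of maximal letters -/
noncomputable def bstart (w' : Fin (r*(n+1)) → Fin (n+1)) : ℕ :=
  sInf {i : ℕ | ∃ h : i < r*(n+1), w' ⟨i, h⟩ = Fin.last n}

variable {r n}

lemma ins_lt {p : Fin (r*n+1)} {w : Fin (r*n) → Fin n} {i : Fin (r*(n+1))}
    (h : (i:ℕ) < (p:ℕ)) (h' : (i:ℕ) < r*n) :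
    ins r n p w i = (w ⟨i, h'⟩).castSucc := by
  simp only [ins, dif_pos h]

lemma ins_mid {p : Fin (r*n+1)} {w : Fin (r*n) → Fin n} {i : Fin (r*(n+1))}
    (h1 : (p:ℕ) ≤ (i:ℕ)) (h2 : (i:ℕ) < (p:ℕ) + r) :
    ins r n p w i = Fin.last n := by
  simp only [ins, dif_neg (not_lt.mpr h1), dif_pos h2]

lemma ins_ge {p : Fin (r*n+1)} {w : Fin (r*n) → Fin n} {i : Fin (r*(n+1))}
    (h : (p:ℕ) + r ≤ (i:ℕ)) (h' : (i:ℕ) - r < r*n) :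
    ins r n p w i = (w ⟨(i:ℕ) - r, h'⟩).castSucc := by
  have h1 : ¬ ((i:ℕ) < (p:ℕ)) := by omega
  have h2 : ¬ ((i:ℕ) < (p:ℕ) + r) := by omega
  simp only [ins, dif_neg h1, dif_neg h2]

lemma ins_eq_last_iff {p : Fin (r*n+1)} {w : Fin (r*n) → Fin n} {i : Fin (r*(n+1))} :
    ins r n p w i = Fin.last n ↔ (p:ℕ) ≤ (i:ℕ) ∧ (i:ℕ) < (p:ℕ) + r := by
  constructor
  · intro h
    by_contra hc
    rcases Nat.lt_or_ge (i:ℕ) (p:ℕ) with h1 | h1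
    · rw [ins_lt h1 (lt_of_lt_of_le h1 (Nat.lt_succ_iff.mp p.isLt))] at h
      exact (Fin.castSucc_lt_last _).ne h
    · have h2 : (p:ℕ) + r ≤ (i:ℕ) := by omega
      have hs := rsucc r n
      have hi := i.isLt
      rw [ins_ge h2 (by omega)] at h
      exact (Fin.castSucc_lt_last _).ne h
  · intro ⟨h1, h2⟩; exact ins_mid h1 h2

lemma del_spec {p : ℕ} {w' : Fin (r*(n+1)) → Fin (n+1)} (i : Fin (r*n))
    (hj : (lix r p i : ℕ) < r*(n+1))
    (hne : w' ⟨lix r p (i:ℕ), hj⟩ ≠ Fin.last n) :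
    (del r n p w' i).castSucc = w' ⟨lix r p (i:ℕ), hj⟩ := by
  have hv : (w' ⟨lix r p (i:ℕ), hj⟩ : ℕ) < n := Fin.val_lt_last hne
  apply Fin.ext
  simp only [Fin.coe_castSucc, del]
  rw [Nat.mod_eq_of_lt hv]

lemma ins_count_last (hr : 1 ≤ r) (p : Fin (r*n+1)) (w : Fin (r*n) → Fin n) :
    (univ.filter (fun i : Fin (r*(n+1)) => ins r n p w i = Fin.last n)).card = r := by
  have hs := rsucc r n
  have hpb : (p:ℕ) ≤ r*n := Nat.lt_succ_iff.mp p.isLt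
  have goal : (univ.filter (fun i : Fin (r*(n+1)) => ins r n p w i = Fin.last n)).card
      = (univ : Finset (Fin r)).card := by
    refine Finset.card_bij'
      (fun (a : Fin (r*(n+1))) (ha : a ∈ univ.filter (fun i : Fin (r*(n+1)) => ins r n p w i = Fin.last n)) =>
        (⟨(a:ℕ) - (p:ℕ), by
          have h1 := (mem_filter.mp ha).2
          rw [ins_eq_last_iff] at h1
          omega⟩ : Fin r))
      (fun (k : Fin r) _ => (⟨(p:ℕ) + (k:ℕ), by have := k.isLt; omega⟩ : Fin (r*(n+1))))
      ?_ ?_ ?_ ?_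
    · intro a ha; exact mem_univ _
    · intro k _
      simp only [mem_filter, mem_univ, true_and]
      refine ins_mid ?_ ?_ <;> · simp only []; have := k.isLt; omega
    · intro a ha
      have h1 := (mem_filter.mp ha).2
      rw [ins_eq_last_iff] at h1
      apply Fin.ext
      simp only []
      omega
    · intro k _
      apply Fin.ext
      simp only []
      omega
  simpa using goal

lemma ins_count_mid (p : Fin (r*n+1)) (w : Fin (r*n) → Fin n) (v : Fin n) :
    (univ.filter (fun i : Fin (r*(n+1)) => ins r n p w i = v.castSucc)).card =
    (univ.filter (fun j : Fin (r*n) => w j = v)).card := by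
  have hs := rsucc r n
  have hpb : (p:ℕ) ≤ r*n := Nat.lt_succ_iff.mp p.isLt
  have key : ∀ a : Fin (r*(n+1)), ins r n p w a = v.castSucc →
      ((a:ℕ) < (p:ℕ) ∨ (p:ℕ) + r ≤ (a:ℕ)) := by
    intro a ha
    by_contra hc
    rw [ins_mid (by omega) (by omega)] at ha
    exact (Fin.castSucc_lt_last v).ne' ha
  refine Finset.card_bij'
    (fun (a : Fin (r*(n+1))) (ha : a ∈ univ.filter (fun i : Fin (r*(n+1)) => ins r n p w i = v.castSucc)) =>
      (⟨if (a:ℕ) < (p:ℕ) then (a:ℕ) else (a:ℕ) - r, by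
        have h1 := (mem_filter.mp ha).2
        have := key a h1; have := a.isLt; split <;> omega⟩ : Fin (r*n)))
    (fun (b : Fin (r*n)) (hb : b ∈ univ.filter (fun j : Fin (r*n) => w j = v)) =>
      (⟨lix r (p:ℕ) (b:ℕ), by
        unfold lix; have := b.isLt; split <;> omega⟩ : Fin (r*(n+1))))
    ?_ ?_ ?_ ?_
  · intro a ha
    have h1 := (mem_filter.mp ha).2
    simp only [mem_filter, mem_univ, true_and]
    rcases key a h1 with h | h
    · rw [ins_lt h (by omega)] at h1
      simp only [if_pos h]
      exact Fin.castSucc_inj.mp h1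
    · rw [ins_ge h (by omega)] at h1
      simp only [if_neg (by omega : ¬ ((a:ℕ) < (p:ℕ)))]
      exact Fin.castSucc_inj.mp h1
  · intro b hb
    have h1 := (mem_filter.mp hb).2
    simp only [mem_filter, mem_univ, true_and]
    unfold lix
    by_cases h : (b:ℕ) < (p:ℕ)
    · rw [show (⟨if (b:ℕ) < (p:ℕ) then (b:ℕ) else (b:ℕ) + r, by split <;> (have := b.isLt; omega)⟩ : Fin (r*(n+1)))
          = ⟨(b:ℕ), by have := b.isLt; omega⟩ from Fin.ext (by simp [h])]
      rw [ins_lt (by simpa using h) (by simpa using b.isLt)]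
      rw [Fin.castSucc_inj]
      rw [show (⟨(b:ℕ), _⟩ : Fin (r*n)) = b from Fin.ext rfl]
      exact h1
    · rw [show (⟨if (b:ℕ) < (p:ℕ) then (b:ℕ) else (b:ℕ) + r, by split <;> (have := b.isLt; omega)⟩ : Fin (r*(n+1)))
          = ⟨(b:ℕ) + r, by have := b.isLt; omega⟩ from Fin.ext (by simp [h])]
      rw [ins_ge (by show (p:ℕ) + r ≤ (b:ℕ) + r; omega)
        (by show (b:ℕ) + r - r < r*n; have := b.isLt; omega)]
      rw [Fin.castSucc_inj]
      rw [show (⟨(b:ℕ) + r - r, by omega⟩ : Fin (r*n)) = b from Fin.ext (by simp)]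
      exact h1
  · intro a ha
    have h1 := (mem_filter.mp ha).2
    have hk := key a h1
    apply Fin.ext
    unfold lix
    simp only []
    rcases hk with h | h
    · rw [if_pos h, if_pos h]
    · rw [if_neg (show ¬ ((a:ℕ) < (p:ℕ)) by omega),
          if_neg (show ¬ ((a:ℕ) - r < (p:ℕ)) by omega)]
      omega
  · intro b hb
    apply Fin.ext
    unfold lix
    simp only []
    by_cases h : (b:ℕ) < (p:ℕ)
    · rw [if_pos h, if_pos h]
    · rw [if_neg h, if_neg (by omega)]
      omega

lemma ins_out {p : Fin (r*n+1)} {w : Fin (r*n) → Fin n} {i : Fin (r*(n+1))}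
    (h : (i:ℕ) < (p:ℕ) ∨ (p:ℕ) + r ≤ (i:ℕ)) :
    ∃ j : Fin (r*n), ins r n p w i = (w j).castSucc ∧
      (j:ℕ) = if (i:ℕ) < (p:ℕ) then (i:ℕ) else (i:ℕ) - r := by
  have hs := rsucc r n
  have hpb : (p:ℕ) ≤ r*n := Nat.lt_succ_iff.mp p.isLt
  have hi := i.isLt
  rcases h with h | h
  · exact ⟨⟨(i:ℕ), by omega⟩, ins_lt h (by omega), by simp [h]⟩
  · exact ⟨⟨(i:ℕ) - r, by omega⟩, ins_ge h (by omega), by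
      simp only []
      rw [if_neg (by omega)]⟩

lemma ins_stirling (hr : 1 ≤ r) (p : Fin (r*n+1)) (w : Fin (r*n) → Fin n)
    (hw : IsStirling r n w) : IsStirling r (n+1) (ins r n p w) := by
  constructor
  · intro v
    induction v using Fin.lastCases with
    | last => exact ins_count_last hr p w
    | cast v' => exact (ins_count_mid p w v').trans (hw.1 v')
  · intro a b c hab hbc hac
    by_cases hb : (p:ℕ) ≤ (b:ℕ) ∧ (b:ℕ) < (p:ℕ) + r
    · rw [ins_eq_last_iff.mpr hb]
      exact Fin.le_last _
    · -- b is outside the block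
      have hb' : (b:ℕ) < (p:ℕ) ∨ (p:ℕ) + r ≤ (b:ℕ) := by omega
      have hab' : (a:ℕ) < (b:ℕ) := hab
      have hbc' : (b:ℕ) < (c:ℕ) := hbc
      have ha' : (a:ℕ) < (p:ℕ) ∨ (p:ℕ) + r ≤ (a:ℕ) := by
        by_contra hc
        have ha : ins r n p w a = Fin.last n := ins_eq_last_iff.mpr (by omega)
        have hc2 : ins r n p w c = Fin.last n := hac ▸ ha
        rw [ins_eq_last_iff] at hc2
        omega
      have hc' : (c:ℕ) < (p:ℕ) ∨ (p:ℕ) + r ≤ (c:ℕ) := by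
        by_contra hcc
        have hc2 : ins r n p w c = Fin.last n := ins_eq_last_iff.mpr (by omega)
        have ha : ins r n p w a = Fin.last n := hac.symm ▸ hc2
        rw [ins_eq_last_iff] at ha
        omega
      obtain ⟨ja, hja, hjav⟩ := ins_out (w := w) ha'
      obtain ⟨jb, hjb, hjbv⟩ := ins_out (w := w) hb'
      obtain ⟨jc, hjc, hjcv⟩ := ins_out (w := w) hc'
      have h1 : ja < jb := by
        rw [Fin.lt_def]
        rcases ha' with h | h <;> rcases hb' with h2 | h2 <;>
          · rw [hjav, hjbv]; split_ifs <;> omega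
      have h2 : jb < jc := by
        rw [Fin.lt_def]
        rcases hb' with h | h <;> rcases hc' with h2 | h2 <;>
          · rw [hjbv, hjcv]; split_ifs <;> omega
      have h3 : w ja = w jc := by
        have := hac
        rw [hja, hjc, Fin.castSucc_inj] at this
        exact this
      have h4 : w ja ≤ w jb := hw.2 ja jb jc h1 h2 h3
      rw [hja, hjb]
      exact Fin.castSucc_le_castSucc_iff.mpr h4

lemma block (hr : 1 ≤ r) {w' : Fin (r*(n+1)) → Fin (n+1)} (hw' : IsStirling r (n+1) w') :
    bstart r n w' + r ≤ r*(n+1) ∧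
    ∀ i : Fin (r*(n+1)), (w' i = Fin.last n ↔
      bstart r n w' ≤ (i:ℕ) ∧ (i:ℕ) < bstart r n w' + r) := by
  have hs : r * (n+1) = r * n + r := by ring
  set S : Finset (Fin (r*(n+1))) := univ.filter (fun i => w' i = Fin.last n) with hS
  have hcard : S.card = r := hw'.1 (Fin.last n)
  have hne : S.Nonempty := by
    rw [← Finset.card_pos, hcard]; omega
  set P : Set ℕ := {i : ℕ | ∃ h : i < r*(n+1), w' ⟨i, h⟩ = Fin.last n} with hP
  have hPne : P.Nonempty := by
    obtain ⟨x, hx⟩ := hne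
    exact ⟨x, x.isLt, by simpa [hS] using hx⟩
  have hpmem : bstart r n w' ∈ P := Nat.sInf_mem hPne
  obtain ⟨hplt, hpval⟩ := hpmem
  set p : ℕ := bstart r n w' with hp
  set q : Fin (r*(n+1)) := S.max' hne with hq
  have hqmem : q ∈ S := S.max'_mem hne
  have hqval : w' q = Fin.last n := by simpa [hS] using hqmem
  have hpq : p ≤ (q:ℕ) := by
    have : (⟨p, hplt⟩ : Fin (r*(n+1))) ∈ S := by simpa [hS] using hpval
    exact_mod_cast S.le_max' _ this
  -- interval property
  have hint : ∀ i : Fin (r*(n+1)), p ≤ (i:ℕ) → (i:ℕ) ≤ (q:ℕ) → w' i = Fin.last n := by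
    intro i h1 h2
    rcases eq_or_lt_of_le h1 with h1' | h1'
    · have : i = ⟨p, hplt⟩ := Fin.ext h1'.symm
      rw [this]; exact hpval
    rcases eq_or_lt_of_le h2 with h2' | h2'
    · have : i = q := Fin.ext h2'
      rw [this]; exact hqval
    have hle : w' ⟨p, hplt⟩ ≤ w' i := by
      apply hw'.2 ⟨p, hplt⟩ i q
      · exact h1'
      · exact h2'
      · rw [hpval, hqval]
    rw [hpval] at hle
    exact le_antisymm (Fin.le_last _) hle
  -- S = Icc ⟨p⟩ q
  have hSicc : S = Finset.Icc (⟨p, hplt⟩ : Fin (r*(n+1))) q := by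
    ext i
    simp only [hS, Finset.mem_filter, Finset.mem_univ, true_and, Finset.mem_Icc]
    constructor
    · intro h
      constructor
      · exact Nat.sInf_le ⟨i.isLt, by simpa using h⟩
      · exact S.le_max' _ (by simpa [hS] using h)
    · intro ⟨h1, h2⟩
      exact hint i h1 h2
  have hqpr : (q:ℕ) + 1 = p + r := by
    have := Fin.card_Icc (⟨p, hplt⟩ : Fin (r*(n+1))) q
    rw [← hSicc, hcard] at this
    simp at this
    omega
  refine ⟨by omega, fun i => ?_⟩
  constructor
  · intro h
    have h1 : p ≤ (i:ℕ) := Nat.sInf_le ⟨i.isLt, by simpa using h⟩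
    have h2 : (i:ℕ) ≤ (q:ℕ) := by
      exact_mod_cast S.le_max' i (by simpa [hS] using h)
    omega
  · intro ⟨h1, h2⟩
    exact hint i h1 (by omega)


lemma lix_isLt (p : ℕ) (i : Fin (r*n)) : lix r p (i:ℕ) < r*(n+1) := by
  unfold lix; have := i.isLt; have hs := rsucc r n; split <;> omega

lemma lix_out (p : ℕ) (i : Fin (r*n)) :
    lix r p (i:ℕ) < p ∨ p + r ≤ lix r p (i:ℕ) := by
  unfold lix; split <;> omega

lemma lix_mono (p : ℕ) {a b : ℕ} (h : a < b) : lix r p a < lix r p b := by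
  unfold lix; split_ifs <;> omega

/-- `del_spec` under the block property -/
lemma del_spec' {p : ℕ} {w' : Fin (r*(n+1)) → Fin (n+1)}
    (hb2 : ∀ i : Fin (r*(n+1)), (w' i = Fin.last n ↔ p ≤ (i:ℕ) ∧ (i:ℕ) < p + r))
    (i : Fin (r*n)) :
    (del r n p w' i).castSucc = w' ⟨lix r p (i:ℕ), lix_isLt p i⟩ := by
  apply del_spec
  intro hlast
  have h2 : p ≤ lix r p (i:ℕ) ∧ lix r p (i:ℕ) < p + r := (hb2 _).mp hlast
  have h4 := lix_out (n := n) p i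
  omega

lemma del_stirling (hr : 1 ≤ r) {w' : Fin (r*(n+1)) → Fin (n+1)}
    (hw' : IsStirling r (n+1) w') :
    IsStirling r n (del r n (bstart r n w') w') := by
  obtain ⟨hb1, hb2⟩ := block hr hw'
  set p : ℕ := bstart r n w' with hp
  have hs := rsucc r n
  have hpb : p ≤ r*n := by omega
  constructor
  · intro v
    refine Eq.trans ?_ (hw'.1 v.castSucc)
    refine Finset.card_bij'
      (fun (i : Fin (r*n)) (hi : i ∈ univ.filter (fun i : Fin (r*n) => del r n p w' i = v)) =>
        (⟨lix r p (i:ℕ), lix_isLt p i⟩ : Fin (r*(n+1))))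
      (fun (j : Fin (r*(n+1))) (hj : j ∈ univ.filter (fun j : Fin (r*(n+1)) => w' j = v.castSucc)) =>
        (⟨if (j:ℕ) < p then (j:ℕ) else (j:ℕ) - r, by
          have h1 := (mem_filter.mp hj).2
          have hout : ¬ (p ≤ (j:ℕ) ∧ (j:ℕ) < p + r) := by
            intro hcon
            exact (Fin.castSucc_lt_last v).ne (h1.symm.trans ((hb2 j).mpr hcon))
          have := j.isLt; split <;> omega⟩ : Fin (r*n)))
      ?_ ?_ ?_ ?_
    · intro i hi
      have h1 := (mem_filter.mp hi).2
      simp only [mem_filter, mem_univ, true_and]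
      rw [← del_spec' hb2 i, h1]
    · intro j hj
      have h1 := (mem_filter.mp hj).2
      have hout : ¬ (p ≤ (j:ℕ) ∧ (j:ℕ) < p + r) := by
        intro hcon
        exact (Fin.castSucc_lt_last v).ne (h1.symm.trans ((hb2 j).mpr hcon))
      simp only [mem_filter, mem_univ, true_and]
      rw [← Fin.castSucc_inj, del_spec' hb2]
      convert h1 using 2
      apply Fin.ext
      unfold lix
      simp only []
      split_ifs <;> omega
    · intro i hi
      apply Fin.ext
      unfold lix
      simp only []
      have := i.isLt
      split_ifs <;> omega
    · intro j hj
      have h1 := (mem_filter.mp hj).2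
      have hout : ¬ (p ≤ (j:ℕ) ∧ (j:ℕ) < p + r) := by
        intro hcon
        exact (Fin.castSucc_lt_last v).ne (h1.symm.trans ((hb2 j).mpr hcon))
      apply Fin.ext
      unfold lix
      simp only []
      have := j.isLt
      split_ifs <;> omega
  · intro a b c hab hbc hac
    have ha' := del_spec' hb2 a
    have hbsp := del_spec' hb2 b
    have hc' := del_spec' hb2 c
    have hlt1 : (⟨lix r p (a:ℕ), lix_isLt p a⟩ : Fin (r*(n+1))) < ⟨lix r p (b:ℕ), lix_isLt p b⟩ :=
      lix_mono p hab
    have hlt2 : (⟨lix r p (b:ℕ), lix_isLt p b⟩ : Fin (r*(n+1))) < ⟨lix r p (c:ℕ), lix_isLt p c⟩ :=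
      lix_mono p hbc
    have heq : w' ⟨lix r p (a:ℕ), lix_isLt p a⟩ = w' ⟨lix r p (c:ℕ), lix_isLt p c⟩ := by
      rw [← ha', ← hc', hac]
    have := hw'.2 _ _ _ hlt1 hlt2 heq
    rw [← ha', ← hbsp] at this
    exact Fin.castSucc_le_castSucc_iff.mp this

lemma bstart_ins (hr : 1 ≤ r) (p : Fin (r*n+1)) (w : Fin (r*n) → Fin n) :
    bstart r n (ins r n p w) = (p:ℕ) := by
  have hs := rsucc r n
  have hpb : (p:ℕ) ≤ r*n := Nat.lt_succ_iff.mp p.isLt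
  have hpP : (p:ℕ) ∈ {i : ℕ | ∃ h : i < r*(n+1), ins r n p w ⟨i, h⟩ = Fin.last n} :=
    ⟨by omega, ins_mid (le_refl (p:ℕ)) (by show (p:ℕ) < (p:ℕ) + r; omega)⟩
  unfold bstart
  apply le_antisymm
  · exact Nat.sInf_le hpP
  · refine le_csInf ⟨_, hpP⟩ ?_
    rintro x ⟨hx, hxl⟩
    rw [ins_eq_last_iff] at hxl
    exact hxl.1

lemma del_ins (hr : 1 ≤ r) (p : Fin (r*n+1)) (w : Fin (r*n) → Fin n) :
    del r n (p:ℕ) (ins r n p w) = w := by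
  have hs := rsucc r n
  have hpb : (p:ℕ) ≤ r*n := Nat.lt_succ_iff.mp p.isLt
  funext i
  have hi := i.isLt
  rw [← Fin.castSucc_inj]
  have hne : ins r n p w ⟨lix r (p:ℕ) (i:ℕ), lix_isLt (p:ℕ) i⟩ ≠ Fin.last n := by
    intro hlast
    rw [ins_eq_last_iff] at hlast
    have h5 : (p:ℕ) ≤ lix r (p:ℕ) (i:ℕ) ∧ lix r (p:ℕ) (i:ℕ) < (p:ℕ) + r := hlast
    have h6 := lix_out (n := n) (p:ℕ) i
    omega
  rw [del_spec _ (lix_isLt (p:ℕ) i) hne]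
  by_cases h : (i:ℕ) < (p:ℕ)
  · have hlix : lix r (p:ℕ) (i:ℕ) = (i:ℕ) := if_pos h
    rw [show (⟨lix r (p:ℕ) (i:ℕ), lix_isLt (p:ℕ) i⟩ : Fin (r*(n+1)))
        = ⟨(i:ℕ), by omega⟩ from Fin.ext hlix]
    rw [ins_lt (by simpa using h) (by simpa using hi)]
  · have hlix : lix r (p:ℕ) (i:ℕ) = (i:ℕ) + r := if_neg h
    rw [show (⟨lix r (p:ℕ) (i:ℕ), lix_isLt (p:ℕ) i⟩ : Fin (r*(n+1)))
        = ⟨(i:ℕ) + r, by omega⟩ from Fin.ext hlix]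
    rw [ins_ge (by show (p:ℕ) + r ≤ (i:ℕ) + r; omega) (by show (i:ℕ) + r - r < r*n; omega)]
    exact congrArg (fun j => (w j).castSucc) (Fin.ext (show (i:ℕ) + r - r = (i:ℕ) by omega))

lemma ins_del (hr : 1 ≤ r) {w' : Fin (r*(n+1)) → Fin (n+1)}
    (hw' : IsStirling r (n+1) w') :
    ins r n ⟨bstart r n w', by
      have := (block hr hw').1
      have hs := rsucc r n
      omega⟩ (del r n (bstart r n w') w') = w' := by
  obtain ⟨hb1, hb2⟩ := block hr hw'
  set p : ℕ := bstart r n w' with hp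
  have hs := rsucc r n
  have hpb : p ≤ r*n := by omega
  funext i
  have hi := i.isLt
  rcases Nat.lt_or_ge (i:ℕ) p with h | h
  · rw [ins_lt (by simpa using h) (by omega)]
    rw [del_spec' hb2]
    congr 1
    apply Fin.ext
    show lix r p (i:ℕ) = (i:ℕ)
    exact if_pos h
  · rcases Nat.lt_or_ge (i:ℕ) (p + r) with h2 | h2
    · rw [ins_mid (by simpa using h) (by simpa using h2)]
      exact ((hb2 i).mpr ⟨h, h2⟩).symm
    · rw [ins_ge (by simpa using h2) (by omega)]
      rw [del_spec' hb2]
      congr 1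
      apply Fin.ext
      show lix r p ((i:ℕ) - r) = (i:ℕ)
      unfold lix
      rw [if_neg (by omega)]
      omega

end StirlingAux

open StirlingAux

open scoped Classical in
/-- The number of `r`-Stirling permutations of size `n` is `∏_{s=1}^{n-1} (s*r + 1)`. -/
theorem stirling_card (r n : ℕ) (hr : 1 ≤ r) :
    (univ.filter (fun w : Fin (r * n) → Fin n => IsStirling r n w)).card =
      ∏ s ∈ Finset.Icc 1 (n - 1), (s * r + 1) := by
  induction n with
  | zero =>
    have hall : ∀ w : Fin (r*0) → Fin 0, IsStirling r 0 w := by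
      intro w
      constructor
      · intro v; exact v.elim0
      · intro a; exact absurd a.isLt (by simp)
    rw [Finset.filter_true_of_mem (fun w _ => hall w)]
    simp
  | succ n ih =>
    have key : (univ.filter (fun w' : Fin (r*(n+1)) → Fin (n+1) => IsStirling r (n+1) w')).card
        = ((univ : Finset (Fin (r*n+1))) ×ˢ
            (univ.filter (fun w : Fin (r*n) → Fin n => IsStirling r n w))).card := by
      refine Finset.card_bij'
        (fun (w' : Fin (r*(n+1)) → Fin (n+1))
            (hw' : w' ∈ univ.filter (fun w' : Fin (r*(n+1)) → Fin (n+1) => IsStirling r (n+1) w')) =>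
          ((⟨bstart r n w', by
              have hst := (mem_filter.mp hw').2
              have h1 := (block hr hst).1
              have hs := rsucc r n
              omega⟩ : Fin (r*n+1)), del r n (bstart r n w') w'))
        (fun (a : Fin (r*n+1) × (Fin (r*n) → Fin n)) _ => ins r n a.1 a.2)
        ?_ ?_ ?_ ?_
      · intro w' hw'
        have hst := (mem_filter.mp hw').2
        rw [Finset.mem_product]
        exact ⟨mem_univ _, mem_filter.mpr ⟨mem_univ _, del_stirling hr hst⟩⟩
      · intro a ha
        have hst := (mem_filter.mp ((Finset.mem_product.mp ha).2)).2
        exact mem_filter.mpr ⟨mem_univ _, ins_stirling hr a.1 a.2 hst⟩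
      · intro w' hw'
        have hst := (mem_filter.mp hw').2
        exact ins_del hr hst
      · intro a ha
        refine Prod.ext ?_ ?_
        · apply Fin.ext
          exact bstart_ins hr a.1 a.2
        · show del r n (bstart r n (ins r n a.1 a.2)) (ins r n a.1 a.2) = a.2
          rw [bstart_ins hr a.1 a.2]
          exact del_ins hr a.1 a.2
    rw [key, Finset.card_product, ih]
    simp only [card_univ, Fintype.card_fin]
    cases n with
    | zero => simp
    | succ m =>
      rw [show (m + 1 + 1 - 1) = m + 1 from rfl,
        Finset.prod_Icc_succ_top (by omega) (fun s => s*r+1)]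
      rw [show (m + 1 - 1) = m from rfl]
      ring
end

section
/- The generating function ∑_{ω ∈ S_n(132)} q^{inv(ω)} over 132-avoiding permutations of [n] equals the Carlitz q-Catalan number C_n(q), where C_n(q) satisfies C_{n+1}(q) = ∑_{k=0}^{n} C_k(q) C_{n-k}(q) q^{(k+1)(n-k)} with C_0(q)=1. -/
open Finset Polynomial

/-- The Carlitz `q`-Catalan polynomials, defined by the recurrence
`C_{n+1}(q) = ∑_{k=0}^{n} C_k(q) C_{n-k}(q) q^{(k+1)(n-k)}`, `C_0 = 1`. -/
noncomputable def carlitz : ℕ → Polynomial ℕ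
  | 0 => 1
  | n + 1 =>
    ∑ k ∈ (Finset.range (n + 1)).attach,
      carlitz k.1 * carlitz (n - k.1) * X ^ ((k.1 + 1) * (n - k.1))
  decreasing_by
  · have := Finset.mem_range.mp k.2; omega
  · have := Finset.mem_range.mp k.2; omega

/-- The inversion number of a permutation: the number of pairs `i < j` with `σ i > σ j`. -/
def permInv {n : ℕ} (σ : Equiv.Perm (Fin n)) : ℕ :=
  (univ.filter (fun p : Fin n × Fin n => p.1 < p.2 ∧ σ p.2 < σ p.1)).card

/-- A permutation is 132-avoiding if there are no `i < j < k` with `σ i < σ k < σ j`. -/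
def PermAvoids132 {n : ℕ} (σ : Equiv.Perm (Fin n)) : Prop :=
  ¬ ∃ i j k : Fin n, i < j ∧ j < k ∧ σ i < σ k ∧ σ k < σ j


open Equiv

variable {n k : ℕ}

def cFun (hk : k ≤ n) (a : Perm (Fin k)) (b : Perm (Fin (n - k))) (i : Fin (n + 1)) :
    Fin (n + 1) :=
  if h : (i : ℕ) < k then ⟨n - k + a ⟨i, h⟩, by have := (a ⟨i, h⟩).2; omega⟩
  else if h2 : (i : ℕ) = k then ⟨n, by omega⟩
  else
    have hx : (i : ℕ) - k - 1 < n - k := by have := i.2; omega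
    ⟨b ⟨(i : ℕ) - k - 1, hx⟩, by have := (b ⟨(i : ℕ) - k - 1, hx⟩).2; omega⟩

lemma cFun_lt (hk : k ≤ n) (a : Perm (Fin k)) (b : Perm (Fin (n - k))) (i : Fin (n + 1))
    (h : (i : ℕ) < k) : (cFun hk a b i : ℕ) = n - k + a ⟨i, h⟩ := by
  simp [cFun, h]

lemma cFun_eq (hk : k ≤ n) (a : Perm (Fin k)) (b : Perm (Fin (n - k))) (i : Fin (n + 1))
    (h : (i : ℕ) = k) : (cFun hk a b i : ℕ) = n := by
  simp [cFun, h]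

lemma cFun_gt (hk : k ≤ n) (a : Perm (Fin k)) (b : Perm (Fin (n - k))) (i : Fin (n + 1))
    (h : k < (i : ℕ)) :
    (cFun hk a b i : ℕ) = b ⟨(i : ℕ) - k - 1, by have := i.2; omega⟩ := by
  have h1 : ¬ ((i : ℕ) < k) := by omega
  have h2 : ¬ ((i : ℕ) = k) := by omega
  simp [cFun, h1, h2]

lemma cFun_lt_bounds (hk : k ≤ n) (a : Perm (Fin k)) (b : Perm (Fin (n - k))) (i : Fin (n + 1))
    (h : (i : ℕ) < k) : n - k ≤ (cFun hk a b i : ℕ) ∧ (cFun hk a b i : ℕ) < n := by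
  rw [cFun_lt hk a b i h]
  have := (a ⟨i, h⟩).2; omega

lemma cFun_gt_bound (hk : k ≤ n) (a : Perm (Fin k)) (b : Perm (Fin (n - k))) (i : Fin (n + 1))
    (h : k < (i : ℕ)) : (cFun hk a b i : ℕ) < n - k := by
  rw [cFun_gt hk a b i h]
  exact (b _).2

lemma cFun_inj (hk : k ≤ n) (a : Perm (Fin k)) (b : Perm (Fin (n - k))) :
    Function.Injective (cFun hk a b) := by
  intro i j hij
  have hv : (cFun hk a b i : ℕ) = (cFun hk a b j : ℕ) := by rw [hij]
  ext
  rcases lt_trichotomy (i : ℕ) k with hi | hi | hi <;>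
    rcases lt_trichotomy (j : ℕ) k with hj | hj | hj
  · rw [cFun_lt hk a b i hi, cFun_lt hk a b j hj] at hv
    have : a ⟨(i : ℕ), hi⟩ = a ⟨(j : ℕ), hj⟩ := by ext; omega
    have := a.injective this
    simpa using congrArg Fin.val this
  · have := cFun_lt_bounds hk a b i hi; rw [cFun_eq hk a b j hj] at hv; omega
  · have h1 := cFun_lt_bounds hk a b i hi; have h2 := cFun_gt_bound hk a b j hj; omega
  · have := cFun_lt_bounds hk a b j hj; rw [cFun_eq hk a b i hi] at hv; omega
  · omega
  · have := cFun_gt_bound hk a b j hj; rw [cFun_eq hk a b i hi] at hv; omega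
  · have h1 := cFun_lt_bounds hk a b j hj; have h2 := cFun_gt_bound hk a b i hi; omega
  · have := cFun_gt_bound hk a b i hi; rw [cFun_eq hk a b j hj] at hv; omega
  · rw [cFun_gt hk a b i hi, cFun_gt hk a b j hj] at hv
    have : b ⟨(i : ℕ) - k - 1, by have := i.2; omega⟩ = b ⟨(j : ℕ) - k - 1, by have := j.2; omega⟩ := by
      ext; omega
    have := b.injective this
    have := congrArg Fin.val this
    simp only at this
    omega

noncomputable def cPerm (hk : k ≤ n) (a : Perm (Fin k)) (b : Perm (Fin (n - k))) :
    Perm (Fin (n + 1)) :=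
  Equiv.ofBijective (cFun hk a b) ((Finite.injective_iff_bijective).mp (cFun_inj hk a b))

lemma cPerm_apply (hk : k ≤ n) (a : Perm (Fin k)) (b : Perm (Fin (n - k))) (i : Fin (n + 1)) :
    cPerm hk a b i = cFun hk a b i := rfl

lemma card_filter_val_lt (m t : ℕ) (h : t ≤ m) :
    ((univ : Finset (Fin m)).filter fun i : Fin m => (i : ℕ) < t).card = t := by
  rcases Nat.eq_zero_or_pos m with hm | hm
  · subst hm
    have : t = 0 := by omega
    subst this
    simp
  rw [← Finset.card_range t]
  apply Finset.card_nbij' (fun i : Fin m => (i : ℕ))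
    (fun j : ℕ => if hj : j < m then ⟨j, hj⟩ else ⟨0, hm⟩)
  · intro x hx; simp at hx ⊢; omega
  · intro x hx; simp only [Finset.mem_coe, Finset.mem_range] at hx
    have hxm : x < m := by omega
    simp [hxm]; omega
  · intro x hx; simp only [Finset.mem_coe, Finset.mem_filter] at hx
    have : (x : ℕ) < m := x.2
    simp [this]
  · intro x hx; simp only [Finset.mem_coe, Finset.mem_range] at hx
    have hxm : x < m := by omega
    simp [hxm]

lemma card_filter_lt_val (m t : ℕ) (h : t < m) :
    ((univ : Finset (Fin m)).filter fun i : Fin m => t < (i : ℕ)).card = m - t - 1 := by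
  have h1 := Finset.card_filter_add_card_filter_not (s := (univ : Finset (Fin m)))
    (fun i : Fin m => (i : ℕ) < t + 1)
  have h2 : ((univ : Finset (Fin m)).filter fun i : Fin m => ¬ ((i : ℕ) < t + 1)) =
      ((univ : Finset (Fin m)).filter fun i : Fin m => t < (i : ℕ)) := by
    apply Finset.filter_congr; intro i _; simp
  rw [h2, card_filter_val_lt m (t + 1) (by omega)] at h1
  simp [Finset.card_univ] at h1
  omega

lemma cPerm_avoids (hk : k ≤ n) (a : Perm (Fin k)) (b : Perm (Fin (n - k)))
    (ha : PermAvoids132 a) (hb : PermAvoids132 b) : PermAvoids132 (cPerm hk a b) := by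
  rintro ⟨i, j, l, hij, hjl, h1, h2⟩
  rw [Fin.lt_def] at hij hjl h1 h2
  simp only [cPerm_apply] at h1 h2
  rcases lt_trichotomy (l : ℕ) k with hl | hl | hl
  · -- all three < k : pattern in a
    have hjk : (j : ℕ) < k := by omega
    have hik : (i : ℕ) < k := by omega
    rw [cFun_lt hk a b i hik] at h1
    rw [cFun_lt hk a b j hjk] at h2
    rw [cFun_lt hk a b l hl] at h1 h2
    exact ha ⟨⟨i, hik⟩, ⟨j, hjk⟩, ⟨l, hl⟩, Fin.mk_lt_mk.mpr hij,
      Fin.mk_lt_mk.mpr hjl, by rw [Fin.lt_def]; omega, by rw [Fin.lt_def]; omega⟩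
  · -- l = k : σ l = n is max, σ l < σ j impossible
    rw [cFun_eq hk a b l hl] at h2
    have : (cFun hk a b j : ℕ) < n + 1 := (cFun hk a b j).2
    rcases lt_trichotomy (j : ℕ) k with hj | hj | hj
    · have := (cFun_lt_bounds hk a b j hj).2; omega
    · omega
    · omega
  · -- l > k
    rcases lt_trichotomy (i : ℕ) k with hi | hi | hi
    · -- i < k, l > k : σ i ≥ n - k > σ l
      have := (cFun_lt_bounds hk a b i hi).1
      have := cFun_gt_bound hk a b l hl
      omega
    · rw [cFun_eq hk a b i hi] at h1
      have := cFun_gt_bound hk a b l hl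
      omega
    · -- all three > k : pattern in b
      have hj : k < (j : ℕ) := by omega
      rw [cFun_gt hk a b i hi] at h1
      rw [cFun_gt hk a b j hj] at h2
      rw [cFun_gt hk a b l hl] at h1 h2
      refine hb ⟨⟨(i : ℕ) - k - 1, by have := i.2; omega⟩, ⟨(j : ℕ) - k - 1, by have := j.2; omega⟩,
        ⟨(l : ℕ) - k - 1, by have := l.2; omega⟩, Fin.mk_lt_mk.mpr (by omega),
        Fin.mk_lt_mk.mpr (by omega), by rw [Fin.lt_def]; exact h1, by rw [Fin.lt_def]; exact h2⟩

def embShift (hk : k ≤ n) : Fin (n - k) ↪ Fin (n + 1) :=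
  ⟨fun i => ⟨k + 1 + i, by have := i.2; omega⟩, by
    intro i j hij
    have := congrArg Fin.val hij
    simp only at this
    ext; omega⟩

lemma cPerm_inv (hk : k ≤ n) (a : Perm (Fin k)) (b : Perm (Fin (n - k))) :
    permInv (cPerm hk a b) = permInv a + permInv b + (k + 1) * (n - k) := by
  classical
  set σ := cPerm hk a b with hσ
  have hkk : k ≤ n + 1 := by omega
  set A : Finset (Fin (n+1) × Fin (n+1)) :=
    (univ.filter (fun p : Fin k × Fin k => p.1 < p.2 ∧ a p.2 < a p.1)).map
      ((Fin.castLEEmb hkk).prodMap (Fin.castLEEmb hkk)) with hA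
  set B : Finset (Fin (n+1) × Fin (n+1)) :=
    (univ.filter (fun p : Fin (n-k) × Fin (n-k) => p.1 < p.2 ∧ b p.2 < b p.1)).map
      ((embShift hk).prodMap (embShift hk)) with hB
  set C : Finset (Fin (n+1) × Fin (n+1)) :=
    univ.filter (fun p : Fin (n+1) × Fin (n+1) => (p.1 : ℕ) ≤ k ∧ k < (p.2 : ℕ)) with hC
  have memA : ∀ p : Fin (n+1) × Fin (n+1), p ∈ A ↔
      ((p.1 : ℕ) < k ∧ (p.2 : ℕ) < k ∧ p.1 < p.2 ∧ σ p.2 < σ p.1) := by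
    intro p
    constructor
    · rintro hp
      rw [hA, Finset.mem_map] at hp
      obtain ⟨⟨q1, q2⟩, hq, hpq⟩ := hp
      simp only [Finset.mem_filter, Finset.mem_univ, true_and] at hq
      have hpq1 : p.1 = Fin.castLE hkk q1 ∧ p.2 = Fin.castLE hkk q2 := by
        constructor <;> rw [← hpq] <;> rfl
      obtain ⟨e1, e2⟩ := hpq1
      have hv1 : (p.1 : ℕ) = (q1 : ℕ) := by rw [e1]; rfl
      have hv2 : (p.2 : ℕ) = (q2 : ℕ) := by rw [e2]; rfl
      have hq1k : (p.1 : ℕ) < k := by rw [hv1]; exact q1.2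
      have hq2k : (p.2 : ℕ) < k := by rw [hv2]; exact q2.2
      refine ⟨hq1k, hq2k, by rw [Fin.lt_def, hv1, hv2]; exact hq.1, ?_⟩
      rw [Fin.lt_def]
      simp only [hσ, cPerm_apply]
      rw [cFun_lt hk a b p.1 hq1k, cFun_lt hk a b p.2 hq2k]
      have e1' : (⟨(p.1 : ℕ), hq1k⟩ : Fin k) = q1 := by ext; exact hv1
      have e2' : (⟨(p.2 : ℕ), hq2k⟩ : Fin k) = q2 := by ext; exact hv2
      rw [e1', e2']
      have := hq.2
      rw [Fin.lt_def] at this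
      omega
    · rintro ⟨h1, h2, h3, h4⟩
      rw [hA, Finset.mem_map]
      refine ⟨(⟨(p.1 : ℕ), h1⟩, ⟨(p.2 : ℕ), h2⟩), ?_, ?_⟩
      · simp only [Finset.mem_filter, Finset.mem_univ, true_and]
        rw [Fin.lt_def] at h3 h4 ⊢
        simp only [hσ, cPerm_apply] at h4
        rw [cFun_lt hk a b p.1 h1, cFun_lt hk a b p.2 h2] at h4
        exact ⟨h3, by rw [Fin.lt_def]; omega⟩
      · ext <;> rfl
  have memB : ∀ p : Fin (n+1) × Fin (n+1), p ∈ B ↔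
      (k < (p.1 : ℕ) ∧ k < (p.2 : ℕ) ∧ p.1 < p.2 ∧ σ p.2 < σ p.1) := by
    intro p
    constructor
    · rintro hp
      rw [hB, Finset.mem_map] at hp
      obtain ⟨⟨q1, q2⟩, hq, hpq⟩ := hp
      simp only [Finset.mem_filter, Finset.mem_univ, true_and] at hq
      have e1 : p.1 = embShift hk q1 ∧ p.2 = embShift hk q2 := by
        constructor <;> rw [← hpq] <;> rfl
      obtain ⟨e1, e2⟩ := e1
      have hv1 : (p.1 : ℕ) = k + 1 + (q1 : ℕ) := by rw [e1]; rfl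
      have hv2 : (p.2 : ℕ) = k + 1 + (q2 : ℕ) := by rw [e2]; rfl
      have hq1k : k < (p.1 : ℕ) := by omega
      have hq2k : k < (p.2 : ℕ) := by omega
      have hlt := hq.1; have hbv := hq.2
      rw [Fin.lt_def] at hlt hbv
      refine ⟨hq1k, hq2k, by rw [Fin.lt_def]; omega, ?_⟩
      rw [Fin.lt_def]
      simp only [hσ, cPerm_apply]
      rw [cFun_gt hk a b p.1 hq1k, cFun_gt hk a b p.2 hq2k]
      have e1' : (⟨(p.1 : ℕ) - k - 1, by have := p.1.2; omega⟩ : Fin (n-k)) = q1 := by ext; simp; omega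
      have e2' : (⟨(p.2 : ℕ) - k - 1, by have := p.2.2; omega⟩ : Fin (n-k)) = q2 := by ext; simp; omega
      rw [e1', e2']
      omega
    · rintro ⟨h1, h2, h3, h4⟩
      rw [hB, Finset.mem_map]
      refine ⟨(⟨(p.1 : ℕ) - k - 1, by have := p.1.2; omega⟩, ⟨(p.2 : ℕ) - k - 1, by have := p.2.2; omega⟩), ?_, ?_⟩
      · simp only [Finset.mem_filter, Finset.mem_univ, true_and]
        rw [Fin.lt_def] at h3 h4 ⊢
        simp only [hσ, cPerm_apply] at h4
        rw [cFun_gt hk a b p.1 h1, cFun_gt hk a b p.2 h2] at h4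
        refine ⟨by simp; omega, by rw [Fin.lt_def]; exact h4⟩
      · have hv1 : ((embShift hk ⟨(p.1 : ℕ) - k - 1, by have := p.1.2; omega⟩ : Fin (n+1)) : ℕ)
            = k + 1 + ((p.1 : ℕ) - k - 1) := rfl
        ext
        · simp only [Function.Embedding.prodMap, Function.Embedding.coeFn_mk, Prod.map]
          show ((embShift hk _ : Fin (n+1)) : ℕ) = _
          show k + 1 + ((p.1 : ℕ) - k - 1) = (p.1 : ℕ); omega
        · show ((embShift hk _ : Fin (n+1)) : ℕ) = _
          show k + 1 + ((p.2 : ℕ) - k - 1) = (p.2 : ℕ); omega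
  have hT : univ.filter (fun p : Fin (n+1) × Fin (n+1) => p.1 < p.2 ∧ σ p.2 < σ p.1)
      = (A ∪ B) ∪ C := by
    ext p
    simp only [Finset.mem_union, Finset.mem_filter, Finset.mem_univ, true_and, memA, memB, hC]
    constructor
    · rintro ⟨h3, h4⟩
      rcases lt_trichotomy (p.2 : ℕ) k with h | h | h
      · exact Or.inl (Or.inl ⟨by rw [Fin.lt_def] at h3; omega, h, h3, h4⟩)
      · exfalso
        rw [Fin.lt_def] at h4
        simp only [hσ, cPerm_apply] at h4
        rw [cFun_eq hk a b p.2 h] at h4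
        have := (cFun hk a b p.1).2
        omega
      · rcases lt_trichotomy (p.1 : ℕ) k with h' | h' | h'
        · exact Or.inr ⟨by omega, h⟩
        · exact Or.inr ⟨by omega, h⟩
        · exact Or.inl (Or.inr ⟨h', by omega, h3, h4⟩)
    · rintro ((⟨_, _, h3, h4⟩ | ⟨_, _, h3, h4⟩) | ⟨hc1, hc2⟩)
      · exact ⟨h3, h4⟩
      · exact ⟨h3, h4⟩
      · refine ⟨by rw [Fin.lt_def]; omega, ?_⟩
        rw [Fin.lt_def]
        simp only [hσ, cPerm_apply]
        have h2 := cFun_gt_bound hk a b p.2 hc2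
        rcases lt_or_eq_of_le hc1 with h' | h'
        · have := (cFun_lt_bounds hk a b p.1 h').1; omega
        · rw [cFun_eq hk a b p.1 h']; omega
  have hdAB : Disjoint A B := by
    rw [Finset.disjoint_left]
    intro p hpA hpB
    rw [memA] at hpA; rw [memB] at hpB
    omega
  have hdABC : Disjoint (A ∪ B) C := by
    rw [Finset.disjoint_left]
    intro p hp hpC
    simp only [hC, Finset.mem_filter, Finset.mem_univ, true_and] at hpC
    rcases Finset.mem_union.mp hp with h | h
    · rw [memA] at h; omega
    · rw [memB] at h; omega
  have hcardC : C.card = (k + 1) * (n - k) := by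
    have e1 : C = (univ.filter fun i : Fin (n+1) => (i : ℕ) < k + 1) ×ˢ
        (univ.filter fun i : Fin (n+1) => k < (i : ℕ)) := by
      rw [hC, ← Finset.univ_product_univ,
        Finset.filter_product (fun i : Fin (n+1) => (i : ℕ) ≤ k) (fun i : Fin (n+1) => k < (i : ℕ))]
      congr 1
      apply Finset.filter_congr
      intro i _
      constructor
      · intro h; omega
      · intro h; omega
    rw [e1, Finset.card_product, card_filter_val_lt (n+1) (k+1) (by omega),
      card_filter_lt_val (n+1) k (by omega)]
    congr 1
    omega
  show (univ.filter (fun p : Fin (n+1) × Fin (n+1) => p.1 < p.2 ∧ σ p.2 < σ p.1)).card = _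
  rw [hT, Finset.card_union_of_disjoint hdABC, Finset.card_union_of_disjoint hdAB,
    hA, hB, Finset.card_map, Finset.card_map, hcardC]
  rfl

section Decompose

variable (hk : k ≤ n) (σ : Perm (Fin (n + 1)))

lemma sep_cross (hav : PermAvoids132 σ) (hσk : σ ⟨k, by omega⟩ = ⟨n, by omega⟩)
    (i j : Fin (n + 1)) (hi : (i : ℕ) < k) (hj : k < (j : ℕ)) : σ j < σ i := by
  by_contra hc
  push_neg at hc
  have hne : σ i ≠ σ j := fun h => by
    have := σ.injective h
    have := congrArg Fin.val this
    omega
  have hlt : σ i < σ j := lt_of_le_of_ne hc hne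
  have hjn : σ j ≠ ⟨n, by omega⟩ := fun h => by
    have := σ.injective (h.trans hσk.symm)
    have := congrArg Fin.val this
    simp at this
    omega
  have hjn' : (σ j : ℕ) < n := by
    have := (σ j).2
    rcases lt_or_eq_of_le (Nat.lt_succ_iff.mp this) with h | h
    · exact h
    · exact absurd (Fin.ext h) hjn
  exact hav ⟨i, ⟨k, by omega⟩, j, by rw [Fin.lt_def]; exact hi, by rw [Fin.lt_def]; exact hj,
    hlt, by rw [Fin.lt_def, hσk]; exact hjn'⟩

lemma sep_high (hav : PermAvoids132 σ) (hσk : σ ⟨k, by omega⟩ = ⟨n, by omega⟩)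
    (i : Fin (n + 1)) (hi : (i : ℕ) < k) : n - k ≤ (σ i : ℕ) ∧ (σ i : ℕ) < n := by
  constructor
  · have hcard := Finset.card_le_card_of_injOn σ
      (s := (univ : Finset (Fin (n+1))).filter fun j : Fin (n+1) => k < (j : ℕ))
      (t := (univ : Finset (Fin (n+1))).filter fun v : Fin (n+1) => (v : ℕ) < (σ i : ℕ))
      (fun j hjm => by
        simp only [Finset.mem_coe, Finset.mem_filter, Finset.mem_univ, true_and] at hjm ⊢
        have := sep_cross hk σ hav hσk i j hi hjm
        rw [Fin.lt_def] at this
        exact this)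
      (σ.injective.injOn)
    rw [card_filter_lt_val (n+1) k (by omega), card_filter_val_lt (n+1) (σ i : ℕ)
      (by have := (σ i).2; omega)] at hcard
    omega
  · have hne : σ i ≠ ⟨n, by omega⟩ := fun h => by
      have := σ.injective (h.trans hσk.symm)
      have := congrArg Fin.val this
      simp at this
      omega
    have := (σ i).2
    rcases lt_or_eq_of_le (Nat.lt_succ_iff.mp this) with h | h
    · exact h
    · exact absurd (Fin.ext h) hne

lemma sep_low (hav : PermAvoids132 σ) (hσk : σ ⟨k, by omega⟩ = ⟨n, by omega⟩)
    (j : Fin (n + 1)) (hj : k < (j : ℕ)) : (σ j : ℕ) < n - k := by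
  have hcard := Finset.card_le_card_of_injOn σ
    (s := (univ : Finset (Fin (n+1))).filter fun i : Fin (n+1) => (i : ℕ) < k + 1)
    (t := (univ : Finset (Fin (n+1))).filter fun v : Fin (n+1) => (σ j : ℕ) < (v : ℕ))
    (fun i him => by
      simp only [Finset.mem_coe, Finset.mem_filter, Finset.mem_univ, true_and] at him ⊢
      rcases lt_or_eq_of_le (Nat.lt_succ_iff.mp him) with h | h
      · have := sep_cross hk σ hav hσk i j h hj
        rw [Fin.lt_def] at this
        exact this
      · have hieq : i = ⟨k, by omega⟩ := Fin.ext h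
        rw [hieq, hσk]
        have hjn : σ j ≠ ⟨n, by omega⟩ := fun hn => by
          have := σ.injective (hn.trans hσk.symm)
          have := congrArg Fin.val this
          simp at this
          omega
        have := (σ j).2
        rcases lt_or_eq_of_le (Nat.lt_succ_iff.mp this) with h' | h'
        · exact h'
        · exact absurd (Fin.ext h') hjn)
    (σ.injective.injOn)
  rw [card_filter_val_lt (n+1) (k+1) (by omega),
    card_filter_lt_val (n+1) (σ j : ℕ) (by have := (σ j).2; omega)] at hcard
  omega

noncomputable def dA (hhi : ∀ i : Fin (n + 1), (i : ℕ) < k → n - k ≤ (σ i : ℕ) ∧ (σ i : ℕ) < n) :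
    Perm (Fin k) :=
  Equiv.ofBijective
    (fun i : Fin k => (⟨(σ (Fin.castLE (by omega) i) : ℕ) - (n - k), by
      have h := hhi (Fin.castLE (by omega) i) (by simpa using i.2)
      omega⟩ : Fin k))
    (Finite.injective_iff_bijective.mp (by
      intro x y hxy
      have hvx := hhi (Fin.castLE (by omega) x) (by simpa using x.2)
      have hvy := hhi (Fin.castLE (by omega) y) (by simpa using y.2)
      have hv := congrArg Fin.val hxy
      simp only at hv
      have : σ (Fin.castLE (by omega) x) = σ (Fin.castLE (by omega) y) := Fin.ext (by omega)
      have := σ.injective this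
      have := congrArg Fin.val this
      simp only [Fin.coe_castLE] at this
      exact Fin.ext this))

noncomputable def dB (hlo : ∀ j : Fin (n + 1), k < (j : ℕ) → (σ j : ℕ) < n - k) :
    Perm (Fin (n - k)) :=
  Equiv.ofBijective
    (fun i : Fin (n - k) => (⟨(σ ⟨k + 1 + i, by have := i.2; omega⟩ : ℕ), by
      exact hlo ⟨k + 1 + i, by have := i.2; omega⟩ (by simp; omega)⟩ : Fin (n - k)))
    (Finite.injective_iff_bijective.mp (by
      intro x y hxy
      have hv := congrArg Fin.val hxy
      simp only at hv
      have : σ ⟨k + 1 + x, by have := x.2; omega⟩ = σ ⟨k + 1 + y, by have := y.2; omega⟩ :=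
        Fin.ext hv
      have := σ.injective this
      have := congrArg Fin.val this
      simp only at this
      exact Fin.ext (by omega)))

lemma dA_apply (hhi) (i : Fin k) :
    (dA hk σ hhi i : ℕ) = (σ (Fin.castLE (by omega) i) : ℕ) - (n - k) := rfl

lemma dB_apply (hlo) (i : Fin (n - k)) :
    (dB hk σ hlo i : ℕ) = (σ ⟨k + 1 + i, by have := i.2; omega⟩ : ℕ) := rfl

end Decompose

lemma val_congr {m : ℕ} (σ : Perm (Fin m)) {i j : Fin m} (h : (i : ℕ) = (j : ℕ)) :
    (σ i : ℕ) = (σ j : ℕ) := by rw [Fin.ext h]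

lemma recompose (hk : k ≤ n) (σ : Perm (Fin (n + 1)))
    (hhi : ∀ i : Fin (n + 1), (i : ℕ) < k → n - k ≤ (σ i : ℕ) ∧ (σ i : ℕ) < n)
    (hlo : ∀ j : Fin (n + 1), k < (j : ℕ) → (σ j : ℕ) < n - k)
    (hσk : σ ⟨k, by omega⟩ = ⟨n, by omega⟩) :
    cPerm hk (dA hk σ hhi) (dB hk σ hlo) = σ := by
  apply Equiv.ext
  intro i
  apply Fin.ext
  rw [cPerm_apply]
  rcases lt_trichotomy (i : ℕ) k with h | h | h
  · rw [cFun_lt _ _ _ i h, dA_apply]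
    have hcast : (σ (Fin.castLE (by omega) (⟨(i : ℕ), h⟩ : Fin k)) : ℕ) = (σ i : ℕ) :=
      val_congr σ (by simp)
    rw [hcast]
    have := hhi i h
    omega
  · rw [cFun_eq _ _ _ i h]
    have hi : i = ⟨k, by omega⟩ := Fin.ext h
    rw [hi, hσk]
  · rw [cFun_gt _ _ _ i h, dB_apply]
    exact val_congr σ (by simp; omega)

lemma dA_cPerm (hk : k ≤ n) (a : Perm (Fin k)) (b : Perm (Fin (n - k))) (hhi) :
    dA hk (cPerm hk a b) hhi = a := by
  apply Equiv.ext
  intro i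
  apply Fin.ext
  rw [dA_apply]
  have h : ((Fin.castLE (by omega : k ≤ n + 1) i : Fin (n + 1)) : ℕ) < k := by simp [i.2]
  rw [cPerm_apply, cFun_lt hk a b _ h]
  have : (⟨((Fin.castLE (by omega : k ≤ n + 1) i : Fin (n + 1)) : ℕ), h⟩ : Fin k) = i := by
    ext; simp
  rw [this]
  omega

lemma dB_cPerm (hk : k ≤ n) (a : Perm (Fin k)) (b : Perm (Fin (n - k))) (hlo) :
    dB hk (cPerm hk a b) hlo = b := by
  apply Equiv.ext
  intro i
  apply Fin.ext
  rw [dB_apply]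
  have h : k < ((⟨k + 1 + (i : ℕ), by have := i.2; omega⟩ : Fin (n + 1)) : ℕ) := by simp; omega
  rw [cPerm_apply, cFun_gt hk a b _ h]
  exact congrArg Fin.val (congrArg b (Fin.ext (by simp; omega)))

lemma dA_avoids (hk : k ≤ n) (σ : Perm (Fin (n + 1))) (hav : PermAvoids132 σ) (hhi) :
    PermAvoids132 (dA hk σ hhi) := by
  rintro ⟨i, j, l, hij, hjl, h1, h2⟩
  rw [Fin.lt_def] at hij hjl h1 h2
  rw [dA_apply, dA_apply] at h1 h2
  have bi := hhi (Fin.castLE (by omega) i) (by simpa using i.2)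
  have bj := hhi (Fin.castLE (by omega) j) (by simpa using j.2)
  have bl := hhi (Fin.castLE (by omega) l) (by simpa using l.2)
  exact hav ⟨Fin.castLE (by omega) i, Fin.castLE (by omega) j, Fin.castLE (by omega) l,
    by rw [Fin.lt_def]; simpa using hij, by rw [Fin.lt_def]; simpa using hjl,
    by rw [Fin.lt_def]; omega, by rw [Fin.lt_def]; omega⟩

lemma dB_avoids (hk : k ≤ n) (σ : Perm (Fin (n + 1))) (hav : PermAvoids132 σ) (hlo) :
    PermAvoids132 (dB hk σ hlo) := by
  rintro ⟨i, j, l, hij, hjl, h1, h2⟩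
  rw [Fin.lt_def] at hij hjl h1 h2
  rw [dB_apply, dB_apply] at h1 h2
  exact hav ⟨⟨k + 1 + (i : ℕ), by have := i.2; omega⟩, ⟨k + 1 + (j : ℕ), by have := j.2; omega⟩,
    ⟨k + 1 + (l : ℕ), by have := l.2; omega⟩,
    by rw [Fin.lt_def]; simp; omega, by rw [Fin.lt_def]; simp; omega,
    by rw [Fin.lt_def]; omega, by rw [Fin.lt_def]; omega⟩


open scoped Classical in
/-- The inversion generating function over 132-avoiding permutations of `[n]`
is the Carlitz `q`-Catalan number `C_n(q)`. -/
theorem inv_gen_avoiding132_eq_carlitz (n : ℕ) :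
    (∑ σ ∈ univ.filter (fun σ : Equiv.Perm (Fin n) => PermAvoids132 σ),
      (X : Polynomial ℕ) ^ permInv σ) = carlitz n := by
  induction n using Nat.strong_induction_on with
  | _ n IH =>
  match n with
  | 0 =>
    have h1 : (univ.filter (fun σ : Perm (Fin 0) => PermAvoids132 σ)) = univ :=
      Finset.filter_true_of_mem (fun σ _ => by rintro ⟨i, _⟩; exact i.elim0)
    have h2 : ∀ σ : Perm (Fin 0), permInv σ = 0 := fun σ => by
      rw [permInv]
      convert Finset.card_empty
      ext p; exact p.1.elim0
    rw [h1]
    simp only [h2, pow_zero, Finset.sum_const, Finset.card_univ, smul_eq_mul, mul_one]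
    rw [carlitz]
    simp
  | m + 1 =>
    rw [carlitz]
    rw [Finset.sum_attach (Finset.range (m + 1))
      (fun k => carlitz k * carlitz (m - k) * X ^ ((k + 1) * (m - k)))]
    rw [← Finset.sum_fiberwise_of_maps_to
      (g := fun σ : Perm (Fin (m + 1)) => ((σ.symm (Fin.last m) : Fin (m + 1)) : ℕ))
      (t := Finset.range (m + 1))
      (fun σ _ => Finset.mem_range.mpr (σ.symm (Fin.last m)).2)]
    apply Finset.sum_congr rfl
    intro k hkm
    have hk : k ≤ m := by simpa using Nat.lt_succ_iff.mp (Finset.mem_range.mp hkm)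
    rw [← IH k (by omega), ← IH (m - k) (by omega)]
    rw [Finset.sum_mul_sum]
    simp only [Finset.sum_mul]
    rw [← Finset.sum_product']
    have hmain : ∀ σ : Perm (Fin (m + 1)),
        σ ∈ (univ.filter fun σ : Perm (Fin (m + 1)) => PermAvoids132 σ).filter
          (fun σ => ((σ.symm (Fin.last m) : Fin (m + 1)) : ℕ) = k) →
        PermAvoids132 σ ∧ σ ⟨k, by omega⟩ = ⟨m, by omega⟩ := by
      intro σ hσ
      rw [Finset.mem_filter, Finset.mem_filter] at hσ
      refine ⟨hσ.1.2, ?_⟩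
      have h1 : σ.symm (Fin.last m) = ⟨k, by omega⟩ := Fin.ext hσ.2
      have h2 := σ.apply_symm_apply (Fin.last m)
      rw [h1] at h2
      exact h2
    have hjm : ∀ (p1 : Perm (Fin k)) (p2 : Perm (Fin (m - k))),
        PermAvoids132 p1 → PermAvoids132 p2 →
        cPerm hk p1 p2 ∈ (univ.filter fun σ : Perm (Fin (m + 1)) => PermAvoids132 σ).filter
          (fun σ => ((σ.symm (Fin.last m) : Fin (m + 1)) : ℕ) = k) := by
      intro p1 p2 h1 h2
      rw [Finset.mem_filter, Finset.mem_filter]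
      refine ⟨⟨Finset.mem_univ _, cPerm_avoids hk p1 p2 h1 h2⟩, ?_⟩
      have hck : cPerm hk p1 p2 ⟨k, by omega⟩ = Fin.last m := by
        apply Fin.ext
        rw [cPerm_apply, cFun_eq hk p1 p2 ⟨k, by omega⟩ rfl]
        rfl
      have hsy := (Equiv.symm_apply_eq (cPerm hk p1 p2)).mpr hck.symm
      rw [hsy]
    refine Finset.sum_bij'
      (fun σ hσ => (dA hk σ (sep_high hk σ (hmain σ hσ).1 (hmain σ hσ).2),
                    dB hk σ (sep_low hk σ (hmain σ hσ).1 (hmain σ hσ).2)))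
      (fun p _ => cPerm hk p.1 p.2) ?_ ?_ ?_ ?_ ?_
    · intro σ hσ
      rw [Finset.mem_product]
      constructor
      · simp only [Finset.mem_filter, Finset.mem_univ, true_and]
        exact dA_avoids hk σ (hmain σ hσ).1 _
      · simp only [Finset.mem_filter, Finset.mem_univ, true_and]
        exact dB_avoids hk σ (hmain σ hσ).1 _
    · intro p hp
      rw [Finset.mem_product] at hp
      simp only [Finset.mem_filter, Finset.mem_univ, true_and] at hp
      exact hjm p.1 p.2 hp.1 hp.2
    · intro σ hσ
      exact recompose hk σ (sep_high hk σ (hmain σ hσ).1 (hmain σ hσ).2)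
        (sep_low hk σ (hmain σ hσ).1 (hmain σ hσ).2) (hmain σ hσ).2
    · rintro ⟨p1, p2⟩ hp
      rw [Finset.mem_product] at hp
      simp only [Finset.mem_filter, Finset.mem_univ, true_and] at hp
      have hm := hjm p1 p2 hp.1 hp.2
      exact Prod.ext
        (dA_cPerm hk p1 p2 (sep_high hk (cPerm hk p1 p2) (hmain _ hm).1 (hmain _ hm).2))
        (dB_cPerm hk p1 p2 (sep_low hk (cPerm hk p1 p2) (hmain _ hm).1 (hmain _ hm).2))
    · intro σ hσ
      rw [← pow_add, ← pow_add]
      congr 1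
      conv_lhs => rw [← recompose hk σ (sep_high hk σ (hmain σ hσ).1 (hmain σ hσ).2)
        (sep_low hk σ (hmain σ hσ).1 (hmain σ hσ).2) (hmain σ hσ).2]
      rw [cPerm_inv]
end

section
/- The sum of q^{Area(d)} over all Dyck paths d of size n equals the Carlitz q-Catalan number C_n(q), where Area(d) is the number of unit boxes between d and the top path 0^n 1^n. -/
open Finset Polynomial

open scoped Classical in
/-- A Dyck path of size `n`: a word of length `2n` with `n` up steps (`false` = `0`)
and `n` right steps (`true` = `1`) such that every prefix has at least as many `0`'s
as `1`'s. -/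
def IsDyck (n : ℕ) (w : Fin (2 * n) → Bool) : Prop :=
  (univ.filter (fun i => w i = false)).card = n ∧
  ∀ k : ℕ,
    (univ.filter (fun i : Fin (2 * n) => (i : ℕ) < k ∧ w i = true)).card ≤
      (univ.filter (fun i : Fin (2 * n) => (i : ℕ) < k ∧ w i = false)).card

open scoped Classical in
/-- The area between a Dyck path `w` and the top path `0^n 1^n`: the number of unit
boxes above `w` and below `0^n1^n`, which equals the number of pairs of positions
`i < j` with `w i = 1` and `w j = 0`. -/
def dyckArea {m : ℕ} (w : Fin m → Bool) : ℕ :=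
  (univ.filter (fun p : Fin m × Fin m => p.1 < p.2 ∧ w p.1 = true ∧ w p.2 = false)).card

namespace DyckAux

/-- inversion count: pairs (i<j) with l i = true, l j = false -/
def linv : List Bool → ℕ
  | [] => 0
  | b :: l => (if b then l.count false else 0) + linv l

def glue (a b : List Bool) : List Bool := false :: (a ++ true :: b)

/-- prefix condition -/
def Pre (l : List Bool) : Prop :=
  ∀ p, ((l.take p).count true) ≤ ((l.take p).count false)

lemma count_true_add_count_false : ∀ l : List Bool, l.count true + l.count false = l.length := by
  intro l
  induction l with
  | nil => simp
  | cons b t ih =>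
    cases b <;> simp [List.count_cons] <;> omega

lemma linv_append (x y : List Bool) :
    linv (x ++ y) = linv x + x.count true * y.count false + linv y := by
  induction x with
  | nil => simp [linv]
  | cons b t ih =>
    cases b <;> simp [linv, ih, List.count_append, List.count_cons] <;> ring

lemma linv_glue {a b : List Bool} {k m : ℕ} (ha : a.count true = k) (hb : b.count false = m) :
    linv (glue a b) = linv a + linv b + (k + 1) * m := by
  show (if false = true then _ else 0) + linv (a ++ true :: b) = _
  rw [if_neg (by simp), linv_append]
  simp [linv, List.count_cons, ha, hb]
  ring


lemma pre_glue {a b : List Bool} (hpa : Pre a) (hba : a.count true = a.count false)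
    (hpb : Pre b) : Pre (glue a b) := by
  intro p
  match p with
  | 0 => simp
  | q + 1 =>
    have e1 : (glue a b).take (q+1) = false :: (a.take q ++ (true :: b).take (q - a.length)) := by
      simp [glue, List.take_append]
    rw [e1]
    simp only [List.count_cons, List.count_append, beq_self_eq_true, if_true,
      show ((false == true) = true) = False by simp, show ((true == false) = true) = False by simp,
      if_false]
    rcases Nat.eq_zero_or_pos (q - a.length) with h | h
    · rw [h]
      have := hpa q
      simp only [List.take_zero, List.count_nil]
      omega
    · obtain ⟨s, hs⟩ : ∃ s, q - a.length = s + 1 := ⟨q - a.length - 1, by omega⟩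
      have hq : a.length ≤ q := by omega
      rw [hs, List.take_succ_cons, List.take_of_length_le hq]
      have h1 := hpb s
      simp only [List.count_cons, beq_self_eq_true, if_true,
        show ((false == true) = true) = False by simp,
        show ((true == false) = true) = False by simp, if_false]
      omega

lemma count_glue_true {a b : List Bool} :
    (glue a b).count true = a.count true + b.count true + 1 := by
  simp [glue, List.count_cons, List.count_append] <;> omega

lemma count_glue_false {a b : List Bool} :
    (glue a b).count false = a.count false + b.count false + 1 := by
  simp [glue, List.count_cons, List.count_append] <;> omega

lemma length_glue {a b : List Bool} : (glue a b).length = a.length + b.length + 2 := by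
  simp [glue] <;> omega

noncomputable def DF : ℕ → Finset (List Bool)
  | 0 => {([] : List Bool)}
  | n + 1 =>
    (Finset.range (n + 1)).attach.biUnion fun k =>
      ((DF k.1) ×ˢ (DF (n - k.1))).image fun p => glue p.1 p.2
  decreasing_by
  · have := Finset.mem_range.mp k.2; omega
  · have := Finset.mem_range.mp k.2; omega


lemma exists_decomp {n : ℕ} {l : List Bool} (hlen : l.length = 2 * (n + 1))
    (hpre : Pre l) (hbal : l.count true = l.count false) :
    ∃ k ≤ n, ∃ a b : List Bool,
      l = glue a b ∧ a.length = 2 * k ∧ Pre a ∧ a.count true = a.count false ∧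
      b.length = 2 * (n - k) ∧ Pre b ∧ b.count true = b.count false := by
  obtain ⟨c, t, rfl⟩ : ∃ c t, l = c :: t := by
    cases l with
    | nil => simp at hlen
    | cons c t => exact ⟨c, t, rfl⟩
  cases c with
  | true =>
    exfalso
    have := hpre 1
    simp at this
  | false =>
  set l : List Bool := false :: t with hl
  have htlen : t.length = 2 * n + 1 := by
    have : l.length = t.length + 1 := by simp [hl]
    omega
  set Q : ℕ → Prop := fun p => 0 < p ∧ (l.take p).count true = (l.take p).count false with hQ
  haveI : DecidablePred Q := Classical.decPred Q
  have hQex : Q (2 * (n + 1)) := by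
    constructor
    · omega
    · rw [List.take_of_length_le (by omega)]
      exact hbal
  set p := Nat.find ⟨_, hQex⟩ with hpdef
  have hp : Q p := Nat.find_spec ⟨_, hQex⟩
  have hmin : ∀ q, q < p → ¬ Q q := fun q hq => Nat.find_min ⟨_, hQex⟩ hq
  have hple : p ≤ 2 * (n + 1) := Nat.find_le hQex
  clear_value p
  clear hpdef
  have hp2 : 2 ≤ p := by
    rcases hp with ⟨hp0, hpeq⟩
    by_contra h
    have hp1 : p = 1 := by omega
    rw [hp1] at hpeq
    simp [hl] at hpeq
  obtain ⟨d, rfl⟩ : ∃ d, p = d + 2 := ⟨p - 2, by omega⟩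
  have hstrict : ∀ q, 1 ≤ q → q < d + 2 →
      (l.take q).count true + 1 ≤ (l.take q).count false := by
    intro q h1 h2
    have h3 := hpre q
    have h4 := hmin q h2
    simp only [hQ] at h4
    push_neg at h4
    have h5 := h4 (by omega)
    omega
  have hlenp : (l.take (d+2)).length = d + 2 := by
    rw [List.length_take]; omega
  have hsum := count_true_add_count_false (l.take (d+2))
  set m := (l.take (d+2)).count true with hm
  have hpm : d + 2 = 2 * m := by omega
  have hm1 : 1 ≤ m := by omega
  have hmn : m ≤ n + 1 := by omega
  set k := m - 1 with hk
  have hkn : k ≤ n := by omega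
  -- character at position d + 1 is true
  have hplt : d + 1 < l.length := by simp [hl]; omega
  have hplt2 : d < t.length := by omega
  have htake_p : l.take (d+2) = l.take (d+1) ++ [l[d+1]] := by
    rw [List.take_succ, List.getElem?_eq_getElem hplt]
    simp
  have hchar : l[d+1] = true := by
    rcases hp with ⟨hp0, hpeq⟩
    have hs := hstrict (d+1) (by omega) (by omega)
    rw [htake_p] at hpeq
    simp only [List.count_append, List.count_singleton] at hpeq
    cases hcc : l[d+1] <;> rw [hcc] at hpeq <;> simp at hpeq <;> omega
  have htchar : t[d]'hplt2 = true := by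
    have : l[d+1] = t[d]'hplt2 := by
      simp [hl]
    rw [← this, hchar]
  set a := t.take d with ha
  set b := t.drop (d+1) with hb
  have hteq : t = a ++ true :: b := by
    conv_lhs => rw [← List.take_append_drop d t]
    congr 1
    rw [List.drop_eq_getElem_cons hplt2, htchar]
  have hglue : l = glue a b := by
    rw [hl, glue, hteq]
  have hlena : a.length = 2 * k := by
    rw [ha, List.length_take]
    omega
  have htake_jl : ∀ j, l.take (j+1) = false :: t.take j := by
    intro j; rw [hl]; rfl
  have hprea : Pre a := by
    intro i
    rw [ha, List.take_take]
    set j := min i d with hj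
    have hjle : j ≤ d := min_le_right _ _
    have hs := hstrict (j+1) (by omega) (by omega)
    rw [htake_jl j] at hs
    simp only [List.count_cons] at hs
    simp at hs
    omega
  have hbala : a.count true = a.count false := by
    rcases hp with ⟨hp0, hpeq⟩
    have e1 : l.take (d+2) = false :: (a ++ [true]) := by
      rw [htake_jl (d+1), List.take_succ, List.getElem?_eq_getElem hplt2, htchar]
      simp [ha]
    rw [e1] at hpeq
    simp [List.count_cons, List.count_append] at hpeq
    omega
  have hcta : a.count true = k := by
    have := count_true_add_count_false a
    omega
  have hdropp : l.drop (d+2) = b := by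
    rw [hl, List.drop_succ_cons, hb]
  have hlenb : b.length = 2 * (n - k) := by
    rw [hb, List.length_drop]
    omega
  have hpreb : Pre b := by
    intro i
    have h1 := hpre (d + 2 + i)
    rw [List.take_add, hdropp] at h1
    simp only [List.count_append] at h1
    rcases hp with ⟨hp0, hpeq⟩
    omega
  have hbalb : b.count true = b.count false := by
    have h1 : l = l.take (d+2) ++ b := by rw [← hdropp]; simp
    rcases hp with ⟨hp0, hpeq⟩
    rw [h1] at hbal
    simp only [List.count_append] at hbal
    omega
  exact ⟨k, hkn, a, b, hglue, hlena, hprea, hbala, hlenb, hpreb, hbalb⟩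


lemma mem_DF {n : ℕ} {l : List Bool} :
    l ∈ DF n ↔ l.length = 2 * n ∧ Pre l ∧ l.count true = l.count false := by
  induction n using Nat.strong_induction_on generalizing l with
  | _ n ih =>
    cases n with
    | zero =>
      rw [DF]
      simp only [Finset.mem_singleton]
      constructor
      · rintro rfl
        refine ⟨by simp, fun p => by simp, by simp⟩
      · rintro ⟨hlen, -, -⟩
        exact List.eq_nil_of_length_eq_zero (by omega)
    | succ n =>
      rw [DF]
      constructor
      · intro hmem
        simp only [Finset.mem_biUnion, Finset.mem_image, Finset.mem_product] at hmem
        obtain ⟨⟨k, hk⟩, -, ⟨a, b⟩, ⟨hamem, hbmem⟩, rfl⟩ := hmem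
        have hk' := Finset.mem_range.mp hk
        obtain ⟨hla, hpa, hba⟩ := (ih k (by omega)).mp hamem
        obtain ⟨hlb, hpb, hbb⟩ := (ih (n-k) (by omega)).mp hbmem
        refine ⟨?_, pre_glue hpa hba hpb, ?_⟩
        · rw [length_glue]; omega
        · rw [count_glue_true, count_glue_false]; omega
      · rintro ⟨hlen, hpre, hbal⟩
        obtain ⟨k, hkn, a, b, rfl, hla, hpa, hba, hlb, hpb, hbb⟩ :=
          exists_decomp hlen hpre hbal
        apply Finset.mem_biUnion.mpr
        refine ⟨⟨k, Finset.mem_range.mpr (by omega)⟩, Finset.mem_attach _ _, ?_⟩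
        apply Finset.mem_image.mpr
        exact ⟨(a, b), Finset.mem_product.mpr
          ⟨(ih k (by omega)).mpr ⟨hla, hpa, hba⟩,
           (ih (n-k) (by omega)).mpr ⟨hlb, hpb, hbb⟩⟩, rfl⟩


lemma DF_counts {k : ℕ} {a : List Bool} (h : a ∈ DF k) :
    a.length = 2 * k ∧ a.count true = k ∧ a.count false = k := by
  obtain ⟨hl, hp, hb⟩ := mem_DF.mp h
  have hs := count_true_add_count_false a
  exact ⟨hl, by omega, by omega⟩

lemma glue_inj {a b a' b' : List Bool} (hlen : a.length = a'.length)
    (h : glue a b = glue a' b') : a = a' ∧ b = b' := by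
  simp only [glue, List.cons.injEq, true_and] at h
  obtain ⟨h1, h2⟩ := List.append_inj h hlen
  exact ⟨h1, by simpa using h2⟩

lemma glue_ne {k k' : ℕ} {a b a' b' : List Bool} (hkk : k < k')
    (ha : a ∈ DF k) (ha' : a' ∈ DF k') : glue a b ≠ glue a' b' := by
  intro h
  obtain ⟨hla, hcta, hcfa⟩ := DF_counts ha
  obtain ⟨hla', -, -⟩ := DF_counts ha'
  obtain ⟨-, hpa', -⟩ := mem_DF.mp ha'
  simp only [glue, List.cons.injEq, true_and] at h
  have h2 := congrArg (List.take (2 * k + 1)) h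
  rw [List.take_append, List.take_of_length_le (by omega),
    List.take_append_of_le_length (by omega)] at h2
  have h3 : (2 * k + 1) - a.length = 1 := by omega
  rw [h3] at h2
  have hct := congrArg (List.count true) h2
  have hcf := congrArg (List.count false) h2
  simp only [List.count_append, List.take_succ_cons, List.take_zero,
    List.count_cons, List.count_nil] at hct hcf
  have := hpa' (2 * k + 1)
  simp at hct hcf
  omega

lemma sum_DF (n : ℕ) :
    (∑ l ∈ DF n, (X : Polynomial ℕ) ^ linv l) = carlitz n := by
  induction n using Nat.strong_induction_on with
  | _ n ih =>
    cases n with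
    | zero =>
      rw [DF, carlitz]
      simp [linv]
    | succ n =>
      rw [DF, carlitz]
      rw [Finset.sum_biUnion]
      · apply Finset.sum_congr rfl
        intro k hk
        have hklt := Finset.mem_range.mp k.2
        rw [Finset.sum_image]
        · rw [Finset.sum_product]
          calc ∑ a ∈ DF k.1, ∑ b ∈ DF (n - k.1), (X : Polynomial ℕ) ^ linv (glue a b)
              = ∑ a ∈ DF k.1, ∑ b ∈ DF (n - k.1),
                  (X : Polynomial ℕ) ^ linv a * X ^ linv b * X ^ ((k.1 + 1) * (n - k.1)) := by
                apply Finset.sum_congr rfl; intro a haa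
                apply Finset.sum_congr rfl; intro b hbb
                rw [linv_glue (DF_counts haa).2.1 (DF_counts hbb).2.2, pow_add, pow_add]
            _ = (∑ a ∈ DF k.1, (X : Polynomial ℕ) ^ linv a) *
                  (∑ b ∈ DF (n - k.1), (X : Polynomial ℕ) ^ linv b) *
                  X ^ ((k.1 + 1) * (n - k.1)) := by
                rw [Finset.sum_mul_sum]
                simp only [Finset.sum_mul]
            _ = carlitz k.1 * carlitz (n - k.1) * X ^ ((k.1 + 1) * (n - k.1)) := by
                rw [ih k.1 (by omega), ih (n - k.1) (by omega)]
        · intro p hp q hq hpq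
          rw [Finset.mem_coe, Finset.mem_product] at hp hq
          have h1 : p.1.length = q.1.length := by
            rw [(DF_counts hp.1).1, (DF_counts hq.1).1]
          obtain ⟨e1, e2⟩ := glue_inj h1 hpq
          exact Prod.ext e1 e2
      · intro x hx y hy hxy
        apply Finset.disjoint_left.mpr
        intro z hz1 hz2
        simp only [Finset.mem_image, Finset.mem_product] at hz1 hz2
        obtain ⟨⟨a, b⟩, ⟨hpa, hpb⟩, rfl⟩ := hz1
        obtain ⟨⟨a', b'⟩, ⟨hqa, hqb⟩, heq⟩ := hz2
        have hne : x.1 ≠ y.1 := fun h => hxy (Subtype.ext h)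
        rcases lt_or_gt_of_ne hne with h | h
        · exact glue_ne h hpa hqa heq.symm
        · exact glue_ne h hqa hpa heq


open scoped Classical

lemma count_ofFn : ∀ {m : ℕ} (w : Fin m → Bool) (c : Bool),
    (List.ofFn w).count c = (univ.filter fun i => w i = c).card := by
  intro m
  induction m with
  | zero => intro w c; simp
  | succ m ih =>
    intro w c
    rw [List.ofFn_succ, List.count_cons, ih (fun i => w i.succ) c,
      Finset.card_filter, Finset.card_filter, Fin.sum_univ_succ]
    simp [beq_iff_eq]
    omega

lemma count_take_ofFn : ∀ {m : ℕ} (w : Fin m → Bool) (k : ℕ) (c : Bool),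
    ((List.ofFn w).take k).count c =
      (univ.filter fun i : Fin m => (i : ℕ) < k ∧ w i = c).card := by
  intro m
  induction m with
  | zero => intro w k c; simp
  | succ m ih =>
    intro w k c
    cases k with
    | zero => simp
    | succ k =>
      rw [List.ofFn_succ, List.take_succ_cons, List.count_cons,
        ih (fun i => w i.succ) k c, Finset.card_filter, Finset.card_filter,
        Fin.sum_univ_succ]
      simp only [Fin.val_zero, Fin.val_succ, Nat.zero_lt_succ, true_and,
        Nat.add_lt_add_iff_right, beq_iff_eq]
      omega

lemma dyckArea_succ {m : ℕ} (w : Fin (m + 1) → Bool) :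
    dyckArea w = (if w 0 = true then (univ.filter fun j : Fin m => w j.succ = false).card else 0)
      + dyckArea (fun i : Fin m => w i.succ) := by
  rw [dyckArea, dyckArea, Finset.card_filter, Finset.card_filter,
    ← Finset.univ_product_univ, Finset.sum_product, Fin.sum_univ_succ]
  congr 1
  · rw [Fin.sum_univ_succ]
    cases h0 : w 0 <;> simp [h0, Fin.succ_pos]
  · conv_rhs => rw [Finset.card_filter, ← Finset.univ_product_univ, Finset.sum_product]
    apply Finset.sum_congr rfl
    intro i _
    rw [Fin.sum_univ_succ]
    simp [Fin.succ_lt_succ_iff]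

lemma linv_ofFn : ∀ {m : ℕ} (w : Fin m → Bool), linv (List.ofFn w) = dyckArea w := by
  intro m
  induction m with
  | zero => intro w; simp [dyckArea, linv]
  | succ m ih =>
    intro w
    rw [List.ofFn_succ]
    show (if w 0 then (List.ofFn fun i => w i.succ).count false else 0)
        + linv (List.ofFn fun i => w i.succ) = _
    rw [ih, count_ofFn, dyckArea_succ]

lemma isDyck_iff {n : ℕ} (w : Fin (2 * n) → Bool) :
    IsDyck n w ↔ List.ofFn w ∈ DF n := by
  rw [mem_DF]
  have hct := count_ofFn w true
  have hcf := count_ofFn w false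
  have hsum := count_true_add_count_false (List.ofFn w)
  have hlen : (List.ofFn w).length = 2 * n := by simp
  constructor
  · rintro ⟨h1, h2⟩
    refine ⟨hlen, ?_, by omega⟩
    intro p
    rw [count_take_ofFn w p true, count_take_ofFn w p false]
    exact h2 p
  · rintro ⟨-, h2, h3⟩
    constructor
    · omega
    · intro p
      have := h2 p
      rw [count_take_ofFn w p true, count_take_ofFn w p false] at this
      exact this


lemma ofFn_getD {l : List Bool} {n : ℕ} (hlen : l.length = 2 * n) :
    List.ofFn (fun i : Fin (2 * n) => l.getD i false) = l := by
  apply List.ext_getElem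
  · simp [hlen]
  · intro i h1 h2
    rw [List.getElem_ofFn]
    exact List.getD_eq_getElem _ _ h2

end DyckAux


open DyckAux in
open scoped Classical in
/-- The area generating function over Dyck paths of size `n` is the Carlitz
`q`-Catalan number `C_n(q)`. -/
theorem area_gen_dyck_eq_carlitz (n : ℕ) :
    (∑ w ∈ univ.filter (fun w : Fin (2 * n) → Bool => IsDyck n w),
      (X : Polynomial ℕ) ^ dyckArea w) = carlitz n := by
  rw [← sum_DF n]
  refine Finset.sum_nbij' (i := fun w => List.ofFn w)
    (j := fun l => fun i : Fin (2 * n) => l.getD i false) ?_ ?_ ?_ ?_ ?_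
  · intro w hw
    exact (isDyck_iff w).mp (Finset.mem_filter.mp hw).2
  · intro l hl
    refine Finset.mem_filter.mpr ⟨Finset.mem_univ _, (isDyck_iff _).mpr ?_⟩
    rw [ofFn_getD (mem_DF.mp hl).1]
    exact hl
  · intro w hw
    funext i
    show (List.ofFn w).getD (i : ℕ) false = w i
    rw [List.getD_eq_getElem _ _ (by simp), List.getElem_ofFn]
  · intro l hl
    exact ofFn_getD (mem_DF.mp hl).1
  · intro w hw
    rw [linv_ofFn]
end

section
/- The sum of q^{maj(d)} over all Dyck paths d of size n (viewed as 0-1 words of length 2n) equals the q-Catalan number (1/[n+1]) * qbinom(2n, n). -/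
open Finset Polynomial

/-- The letter of the word `w` at the 0-based position `i` (junk `false` out of range). -/
def wd {m : ℕ} (w : Fin m → Bool) (i : ℕ) : Bool :=
  if h : i < m then w ⟨i, h⟩ else false

/-- The major index of a 0-1 word: the sum of the (1-based) positions `i` with
`d_i = 1` and `d_{i+1} = 0`. -/
def wordMaj {m : ℕ} (w : Fin m → Bool) : ℕ :=
  ∑ i ∈ (Finset.range (m - 1)).filter (fun i => wd w i = true ∧ wd w (i + 1) = false), (i + 1)

/-- The `q`-integer `[m] = 1 + q + ⋯ + q^{m-1}`. -/
noncomputable def qInt (m : ℕ) : Polynomial ℕ := ∑ i ∈ Finset.range m, X ^ i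

/-- The Gaussian binomial coefficient, via the `q`-Pascal recurrence. -/
noncomputable def qBinom : ℕ → ℕ → Polynomial ℕ
  | _, 0 => 1
  | 0, _ + 1 => 0
  | n + 1, k + 1 => qBinom n k + X ^ (k + 1) * qBinom n (k + 1)

noncomputable def Dq (m b : ℕ) : Polynomial ℕ := match b with
  | 0 => 0
  | b + 1 => qBinom m b

noncomputable def ι (p : Polynomial ℕ) : Polynomial ℤ := p.map (Nat.castRingHom ℤ)

lemma ι_inj : Function.Injective ι :=
  Polynomial.map_injective _ Nat.cast_injective

@[simp] lemma ι_add (p q : Polynomial ℕ) : ι (p + q) = ι p + ι q := Polynomial.map_add _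
@[simp] lemma ι_mul (p q : Polynomial ℕ) : ι (p * q) = ι p * ι q := Polynomial.map_mul _
@[simp] lemma ι_pow (p : Polynomial ℕ) (k : ℕ) : ι (p ^ k) = ι p ^ k := by simp [ι]
@[simp] lemma ι_X : ι X = X := Polynomial.map_X _
@[simp] lemma ι_one : ι 1 = 1 := Polynomial.map_one _
@[simp] lemma ι_zero : ι 0 = 0 := Polynomial.map_zero _
@[simp] lemma ι_sum {α : Type*} (s : Finset α) (f : α → Polynomial ℕ) :
    ι (∑ a ∈ s, f a) = ∑ a ∈ s, ι (f a) := by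
  simp [ι, Polynomial.map_sum]

@[simp] lemma ι_qInt (m : ℕ) : ι (qInt m) = ∑ i ∈ Finset.range m, (X:Polynomial ℤ) ^ i := by
  simp [qInt]

lemma geom (m : ℕ) : ι (qInt m) * (X - 1) = X ^ m - 1 := by
  rw [ι_qInt]; exact geom_sum_mul X m

@[simp] lemma qInt_zero : qInt 0 = 0 := by simp [qInt]

@[simp] lemma qInt_one : qInt 1 = 1 := by simp [qInt]

lemma qInt_succ (n : ℕ) : qInt (n + 1) = qInt n + X ^ n := Finset.sum_range_succ _ _

lemma qInt_succ' (n : ℕ) : qInt (n + 1) = 1 + X * qInt n := by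
  rw [qInt, Finset.sum_range_succ', qInt, Finset.mul_sum]
  simp only [pow_zero, pow_succ]
  rw [add_comm]
  congr 1
  apply Finset.sum_congr rfl
  intro i _
  ring

@[simp] lemma qb_zero (m : ℕ) : qBinom m 0 = 1 := by cases m <;> rfl

lemma qb_succ (n k : ℕ) :
    qBinom (n+1) (k+1) = qBinom n k + X ^ (k+1) * qBinom n (k+1) := rfl

lemma qb_eq_zero (n k : ℕ) (h : n < k) : qBinom n k = 0 := by
  induction n generalizing k with
  | zero => cases k with
    | zero => omega
    | succ k => rfl
  | succ n ih =>
    cases k with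
    | zero => omega
    | succ k => rw [qb_succ, ih k (by omega), ih (k+1) (by omega)]; ring

lemma qb_self (n : ℕ) : qBinom n n = 1 := by
  induction n with
  | zero => rfl
  | succ n ih => rw [qb_succ, ih, qb_eq_zero n (n+1) (by omega)]; ring

lemma qb_one (m : ℕ) : qBinom m 1 = qInt m := by
  induction m with
  | zero => simp [qb_eq_zero 0 1 (by omega)]
  | succ m ih => rw [qb_succ, ih, qb_zero, pow_one, qInt_succ']

-- second Pascal recurrence
lemma qb_succ' (n k : ℕ) :
    qBinom (n+1) (k+1) = qBinom n (k+1) + X ^ (n - k) * qBinom n k := by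
  induction n generalizing k with
  | zero =>
    cases k with
    | zero => simp [qb_one, qInt_succ']
    | succ k =>
      rw [qb_eq_zero 1 (k+2) (by omega), qb_eq_zero 0 (k+2) (by omega),
        qb_eq_zero 0 (k+1) (by omega)]
      ring
  | succ n ih =>
    cases k with
    | zero =>
      rw [qb_one, qb_one, qb_zero, qInt_succ (n+1)]
      simp
    | succ k =>
      rcases le_or_gt (k+1) n with h | h
      · obtain ⟨d, rfl⟩ : ∃ d, n = (k + 1) + d := ⟨n - (k+1), by omega⟩
        have h1 : (k + 1) + d + 1 - (k + 1) = d + 1 := by omega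
        have h2 : (k + 1) + d - k = d + 1 := by omega
        have h3 : (k + 1) + d - (k + 1) = d := by omega
        calc qBinom (k+1+d+1+1) (k+1+1)
            = qBinom (k+1+d+1) (k+1) + X ^ (k+2) * qBinom (k+1+d+1) (k+2) := qb_succ _ _
          _ = (qBinom (k+1+d) (k+1) + X ^ (d+1) * qBinom (k+1+d) k)
              + X ^ (k+2) * (qBinom (k+1+d) (k+2) + X ^ d * qBinom (k+1+d) (k+1)) := by
              rw [ih k, ih (k+1), h2, h3]
          _ = (qBinom (k+1+d) (k+1) + X ^ (k+2) * qBinom (k+1+d) (k+2))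
              + X ^ (d+1) * (qBinom (k+1+d) k + X ^ (k+1) * qBinom (k+1+d) (k+1)) := by
              ring
          _ = qBinom (k+1+d+1) (k+2) + X ^ (k+1+d+1 - (k+1)) * qBinom (k+1+d+1) (k+1) := by
              rw [← qb_succ, ← qb_succ, h1]
      · rcases le_or_gt (k+1) (n+1) with h' | h'
        · have hk : k = n := by omega
          subst hk
          rw [qb_self, qb_eq_zero (k+1) (k+1+1) (by omega), qb_self]
          simp
        · rw [qb_eq_zero _ _ (by omega), qb_eq_zero _ _ (by omega), qb_eq_zero _ _ (by omega)]
          ring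

lemma qInt_add (a b : ℕ) : qInt (a + b) = qInt a + X ^ a * qInt b := by
  induction b with
  | zero => simp
  | succ b ih =>
    rw [show a + (b+1) = (a+b)+1 from rfl, qInt_succ, ih, qInt_succ, pow_add]
    ring

lemma X_pow_ne_one (c : ℕ) : (X : Polynomial ℤ) ^ (c + 1) ≠ 1 := by
  intro h
  have := congrArg Polynomial.natDegree h
  simp [Polynomial.natDegree_X_pow] at this

lemma qb_middle (c : ℕ) : qBinom (2*c+1) c = qBinom (2*c+1) (c+1) := by
  rcases c with _ | c
  · simp [qb_one, qInt_succ']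
  · set c' := c + 1 with hc'
    have h : qBinom (2*c'+1) c' + X ^ (c'+1) * qBinom (2*c'+1) (c'+1)
        = qBinom (2*c'+1) (c'+1) + X ^ (c'+1) * qBinom (2*c'+1) c' := by
      have e1 : qBinom (2*c'+1+1) (c'+1) = qBinom (2*c'+1) c' + X ^ (c'+1) * qBinom (2*c'+1) (c'+1) := by
        rcases c' with _ | t
        · simp at hc'
        · exact qb_succ _ _
      have e2 : qBinom (2*c'+1+1) (c'+1) = qBinom (2*c'+1) (c'+1) + X ^ (2*c'+1 - c') * qBinom (2*c'+1) c' := by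
        rcases c' with _ | t
        · simp at hc'
        · exact qb_succ' _ _
      have h3 : 2*c'+1-c' = c'+1 := by omega
      rw [h3] at e2
      rw [← e1, e2]
    apply ι_inj
    have h' := congrArg ι h
    simp only [ι_add, ι_mul, ι_pow, ι_X] at h'
    have hne : (1 : Polynomial ℤ) - X ^ (c'+1) ≠ 0 := by
      intro hz
      apply X_pow_ne_one c'
      linear_combination -hz
    have : (ι (qBinom (2*c'+1) c') - ι (qBinom (2*c'+1) (c'+1))) * (1 - X ^ (c'+1)) = 0 := by
      linear_combination h'
    rcases mul_eq_zero.mp this with h0 | h0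
    · linear_combination h0
    · exact absurd h0 hne

lemma absorb2 (n : ℕ) : ∀ k, qInt (n + 1 - k) * qBinom (n + 1) k = qInt (n + 1) * qBinom n k := by
  induction n with
  | zero =>
    intro k
    rcases k with _ | j
    · simp
    · rcases j with _ | j
      · simp [qb_eq_zero 0 1 (by omega), qb_self]
      · rw [qb_eq_zero 1 (j+2) (by omega), qb_eq_zero 0 (j+2) (by omega)]
        ring
  | succ n ih =>
    intro k
    rcases k with _ | j
    · simp
    · rcases le_or_gt (j+1) (n+1) with h | h
      · obtain ⟨d, rfl⟩ : ∃ d, n = j + d := ⟨n - j, by omega⟩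
        have h1 : j + d + 1 + 1 - (j + 1) = d + 1 := by omega
        rw [h1]
        apply ι_inj
        have e1 := congrArg ι (qInt_succ d)
        have e2 := congrArg ι (qInt_succ (j+d+1))
        have e3 := congrArg ι (qb_succ (j+d+1) j)
        have e4 := congrArg ι (qb_succ (j+d) j)
        have h1' := congrArg ι (ih j)
        have h2' := congrArg ι (ih (j+1))
        have hj1 : j + d + 1 - j = d + 1 := by omega
        have hj2 : j + d + 1 - (j+1) = d := by omega
        rw [hj1] at h1'
        rw [hj2] at h2'
        simp only [ι_add, ι_mul, ι_pow, ι_X] at e1 e2 e3 e4 h1' h2' ⊢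
        linear_combination ι (qInt (d+1)) * e3 + (X^(j+1) * ι (qBinom (j+d+1) (j+1))) * e1
          + h1' + X^(j+1) * h2' - ι (qBinom (j+d+1) (j+1)) * e2 - ι (qInt (j+d+1)) * e4
      · have hz : n + 1 + 1 - (j+1) = 0 := by omega
        rw [hz, qInt_zero, qb_eq_zero (n+1) (j+1) (by omega)]
        ring

lemma absorb1 (n : ℕ) : ∀ k, qInt (k + 1) * qBinom (n + 1) (k + 1) = qInt (n + 1) * qBinom n k := by
  induction n with
  | zero =>
    intro k
    rcases k with _ | j
    · simp [qb_self]
    · rw [qb_eq_zero 1 (j+2) (by omega), qb_eq_zero 0 (j+1) (by omega)]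
      ring
  | succ n ih =>
    intro k
    rcases k with _ | j
    · simp [qb_one]
    · rcases le_or_gt (j+1) n with h | h
      · obtain ⟨d, rfl⟩ : ∃ d, n = j + 1 + d := ⟨n - (j+1), by omega⟩
        have key2 := absorb2 (j+1+d) (j+1)
        have hj : j + 1 + d + 1 - (j + 1) = d + 1 := by omega
        rw [hj] at key2
        have ihj := ih (j+1)
        have eq : qInt (j+1+d+1+1) = qInt (j+2) + X ^ (j+2) * qInt (d+1) := by
          have : j+1+d+1+1 = (j+2) + (d+1) := by omega
          rw [this, qInt_add]
        apply ι_inj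
        have e3 := congrArg ι (qb_succ (j+1+d+1) (j+1))
        have h1' := congrArg ι ihj
        have h2' := congrArg ι key2
        have e5 := congrArg ι eq
        simp only [ι_add, ι_mul, ι_pow, ι_X] at e3 h1' h2' e5 ⊢
        linear_combination ι (qInt (j+2)) * e3 + X^(j+2) * h1' - X^(j+2) * h2'
          - ι (qBinom (j+1+d+1) (j+1)) * e5
      · rcases le_or_gt (j+1) (n+1) with h' | h'
        · have hj : j = n := by omega
          subst hj
          rw [qb_self, qb_self]
        · rw [qb_eq_zero (n+2) (j+2) (by omega), qb_eq_zero (n+1) (j+1) (by omega)]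
          ring

lemma pascalD (m c : ℕ) : qBinom (m + 1) c = Dq m c + X ^ c * qBinom m c := by
  rcases c with _ | c
  · simp [Dq]
  · exact qb_succ m c

lemma absorbC (n : ℕ) : qInt (n + 1) * Dq (2 * n) n = qInt n * qBinom (2 * n) n := by
  rcases n with _ | m
  · simp [Dq]
  · show qInt (m + 2) * qBinom (2*(m+1)) m = qInt (m+1) * qBinom (2*(m+1)) (m+1)
    have h1 := absorb1 (2*m+1) m
    have h2 := absorb2 (2*m+1) m
    have e2 : 2*m+1+1 - m = m + 2 := by omega
    rw [e2] at h2
    have e1 : 2*m+1+1 = 2*(m+1) := by omega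
    rw [e1] at h1 h2
    rw [h2, h1]

open scoped Classical

noncomputable def Cnt {m : ℕ} (t : Bool) (w : Fin m → Bool) (k : ℕ) : ℕ :=
  (univ.filter (fun i : Fin m => (i : ℕ) < k ∧ w i = t)).card

def Ballot {m : ℕ} (w : Fin m → Bool) : Prop := ∀ k, Cnt true w k ≤ Cnt false w k

noncomputable def Bs (m b : ℕ) : Finset (Fin m → Bool) :=
  univ.filter (fun w => Cnt true w m = b ∧ Ballot w)

noncomputable def Bs0 (m b : ℕ) : Finset (Fin m → Bool) :=
  (Bs m b).filter (fun w => wd w (m-1) = false)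
noncomputable def Bs1 (m b : ℕ) : Finset (Fin m → Bool) :=
  (Bs m b).filter (fun w => wd w (m-1) = true)

noncomputable def P0 (m b : ℕ) : Polynomial ℕ := ∑ w ∈ Bs0 m b, X ^ wordMaj w
noncomputable def P1 (m b : ℕ) : Polynomial ℕ := ∑ w ∈ Bs1 m b, X ^ wordMaj w

lemma Cnt_eq_sum {m : ℕ} (t : Bool) (w : Fin m → Bool) (k : ℕ) :
    Cnt t w k = ∑ i : Fin m, if ((i : ℕ) < k ∧ w i = t) then 1 else 0 :=
  Finset.card_filter _ _

lemma Cnt_mono {m : ℕ} (t : Bool) (w : Fin m → Bool) {k k' : ℕ} (h : k ≤ k') :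
    Cnt t w k ≤ Cnt t w k' := by
  rw [Cnt_eq_sum, Cnt_eq_sum]
  apply Finset.sum_le_sum
  intro i _
  split_ifs with h1 h2
  · exact le_refl 1
  · exact absurd ⟨lt_of_lt_of_le h1.1 h, h1.2⟩ h2
  · exact Nat.zero_le _
  · exact Nat.zero_le _

lemma Cnt_stable {m : ℕ} (t : Bool) (w : Fin m → Bool) {k : ℕ} (h : m ≤ k) :
    Cnt t w k = Cnt t w m := by
  rw [Cnt_eq_sum, Cnt_eq_sum]
  apply Finset.sum_congr rfl
  intro i _
  have h1 : (i : ℕ) < k := lt_of_lt_of_le i.is_lt h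
  simp [h1, i.is_lt]

lemma Cnt_add {m : ℕ} (w : Fin m → Bool) :
    Cnt true w m + Cnt false w m = m := by
  rw [Cnt_eq_sum, Cnt_eq_sum, ← Finset.sum_add_distrib]
  have : ∀ i : Fin m, ((if ((i : ℕ) < m ∧ w i = true) then 1 else 0)
      + if ((i : ℕ) < m ∧ w i = false) then 1 else 0) = 1 := by
    intro i
    cases h : w i <;> simp [h, i.is_lt]
  rw [Finset.sum_congr rfl (fun i _ => this i)]
  simp

lemma Cnt_snoc_le {m : ℕ} (t : Bool) (v : Fin m → Bool) (c : Bool) {k : ℕ} (hk : k ≤ m) :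
    Cnt t (Fin.snoc v c) k = Cnt t v k := by
  rw [Cnt_eq_sum, Cnt_eq_sum, Fin.sum_univ_castSucc]
  simp only [Fin.snoc_castSucc, Fin.coe_castSucc, Fin.snoc_last, Fin.val_last]
  have hz : (if (m < k ∧ c = t) then (1:ℕ) else 0) = 0 := by
    rw [if_neg]; rintro ⟨h1, _⟩; omega
  rw [hz, add_zero]

lemma Cnt_snoc_top {m : ℕ} (t : Bool) (v : Fin m → Bool) (c : Bool) :
    Cnt t (Fin.snoc v c) (m + 1) = Cnt t v m + (if c = t then 1 else 0) := by
  rw [Cnt_eq_sum, Cnt_eq_sum, Fin.sum_univ_castSucc]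
  congr 1
  · apply Finset.sum_congr rfl
    intro i _
    simp [Fin.snoc_castSucc, Fin.coe_castSucc, i.is_lt, Nat.lt_succ_of_lt i.is_lt]
  · simp [Fin.val_last, Fin.snoc_last]

lemma ballot_snoc_iff {m : ℕ} (v : Fin m → Bool) (c : Bool) :
    Ballot (Fin.snoc v c) ↔ Ballot v ∧
      Cnt true (Fin.snoc v c) (m+1) ≤ Cnt false (Fin.snoc v c) (m+1) := by
  constructor
  · intro hb
    refine ⟨?_, hb (m+1)⟩
    intro k
    rcases le_or_gt k m with h | h
    · rw [← Cnt_snoc_le true v c h, ← Cnt_snoc_le false v c h]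
      exact hb k
    · rw [Cnt_stable true v (by omega), Cnt_stable false v (by omega),
        ← Cnt_snoc_le true v c (le_refl m), ← Cnt_snoc_le false v c (le_refl m)]
      exact hb m
  · rintro ⟨hb, htop⟩
    intro k
    rcases le_or_gt k m with h | h
    · rw [Cnt_snoc_le true v c h, Cnt_snoc_le false v c h]
      exact hb k
    · rw [Cnt_stable true (Fin.snoc v c) (by omega : m + 1 ≤ k),
        Cnt_stable false (Fin.snoc v c) (by omega : m + 1 ≤ k)]
      exact htop

lemma wd_lt {m : ℕ} (w : Fin m → Bool) (i : ℕ) (h : i < m) : wd w i = w ⟨i, h⟩ := dif_pos h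

lemma wd_snoc_lt {m : ℕ} (v : Fin m → Bool) (c : Bool) (i : ℕ) (h : i < m) :
    wd (Fin.snoc v c) i = wd v i := by
  rw [wd_lt _ i (by omega : i < m + 1), wd_lt _ i h]
  have : (⟨i, by omega⟩ : Fin (m+1)) = Fin.castSucc ⟨i, h⟩ := rfl
  rw [this, Fin.snoc_castSucc]

lemma wd_snoc_top {m : ℕ} (v : Fin m → Bool) (c : Bool) : wd (Fin.snoc v c) m = c := by
  rw [wd_lt _ m (by omega)]
  have : (⟨m, by omega⟩ : Fin (m+1)) = Fin.last m := rfl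
  rw [this, Fin.snoc_last]

lemma wordMaj_eq_sum {m : ℕ} (w : Fin m → Bool) :
    wordMaj w = ∑ i ∈ Finset.range (m-1),
      if (wd w i = true ∧ wd w (i+1) = false) then i + 1 else 0 := by
  rw [wordMaj, Finset.sum_filter]

lemma wordMaj_snoc {m : ℕ} (v : Fin m → Bool) (c : Bool) :
    wordMaj (Fin.snoc v c)
      = wordMaj v + (if wd v (m-1) = true ∧ c = false then m else 0) := by
  rcases m with _ | t
  · have h0 : wd v 0 = false := by rw [wd]; simp
    simp [wordMaj, h0]
  · rw [wordMaj_eq_sum, wordMaj_eq_sum]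
    have e1 : (t + 1 + 1) - 1 = t + 1 := rfl
    have e2 : (t + 1) - 1 = t := rfl
    rw [e1, e2, Finset.sum_range_succ]
    congr 1
    · apply Finset.sum_congr rfl
      intro i hi
      have hi' : i < t := Finset.mem_range.mp hi
      rw [wd_snoc_lt v c i (by omega), wd_snoc_lt v c (i+1) (by omega)]
    · rw [wd_snoc_lt v c t (by omega), wd_snoc_top]

lemma mem_Bs_iff {m b : ℕ} (w : Fin m → Bool) :
    w ∈ Bs m b ↔ Cnt true w m = b ∧ Ballot w := by
  simp [Bs]

lemma snoc_mem_Bs_false {m b : ℕ} (v : Fin m → Bool) :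
    Fin.snoc v false ∈ Bs (m+1) b ↔ v ∈ Bs m b := by
  rw [mem_Bs_iff, mem_Bs_iff, ballot_snoc_iff,
    Cnt_snoc_top true v false, Cnt_snoc_top false v false]
  have e1 : (if ((false:Bool) = true) then (1:ℕ) else 0) = 0 := by simp
  have e2 : (if ((false:Bool) = false) then (1:ℕ) else 0) = 1 := by simp
  rw [e1, e2, add_zero]
  constructor
  · rintro ⟨h1, h2, _⟩
    exact ⟨h1, h2⟩
  · rintro ⟨h1, h2⟩
    exact ⟨h1, h2, le_trans (h2 m) (by omega)⟩

lemma snoc_mem_Bs_true {m b : ℕ} (v : Fin m → Bool) (h : 2 * (b + 1) ≤ m + 1) :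
    Fin.snoc v true ∈ Bs (m+1) (b+1) ↔ v ∈ Bs m b := by
  rw [mem_Bs_iff, mem_Bs_iff, ballot_snoc_iff,
    Cnt_snoc_top true v true, Cnt_snoc_top false v true]
  have e1 : (if ((true:Bool) = true) then (1:ℕ) else 0) = 1 := by simp
  have e2 : (if ((true:Bool) = false) then (1:ℕ) else 0) = 0 := by simp
  rw [e1, e2, add_zero]
  constructor
  · rintro ⟨h1, h2, _⟩
    exact ⟨by omega, h2⟩
  · rintro ⟨h1, h2⟩
    refine ⟨by omega, h2, ?_⟩
    have := Cnt_add v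
    omega

lemma Bs_empty {m b : ℕ} (h : m < 2 * b) : Bs m b = ∅ := by
  ext w
  simp only [mem_Bs_iff, Finset.notMem_empty, iff_false]
  rintro ⟨h1, h2⟩
  have h3 := h2 m
  have := Cnt_add w
  omega

lemma Dq_zero (m : ℕ) : Dq m 0 = 0 := rfl
lemma Dq_succ (m b : ℕ) : Dq m (b+1) = qBinom m b := rfl

lemma sum_Bs_split (m b : ℕ) :
    ∑ w ∈ Bs m b, (X : Polynomial ℕ) ^ wordMaj w = P0 m b + P1 m b := by
  rw [P0, P1, Bs0, Bs1,
    ← Finset.sum_filter_add_sum_filter_not (Bs m b) (fun w => wd w (m-1) = false)]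
  congr 1
  apply Finset.sum_congr _ (fun _ _ => rfl)
  apply Finset.filter_congr
  intro w _
  simp

lemma snoc_false_eq_self {m b : ℕ} (w : Fin (m+1) → Bool) (hw : w ∈ Bs0 (m+1) b) :
    Fin.snoc (Fin.init w) false = w := by
  rw [Bs0, Finset.mem_filter] at hw
  have hlast : w (Fin.last m) = false := by
    have h2 : wd w m = false := hw.2
    rw [wd_lt w m (by omega)] at h2
    exact h2
  rw [← hlast]
  exact Fin.snoc_init_self w

lemma P0_rec (m b : ℕ) : P0 (m+1) b = P0 m b + X ^ m * P1 m b := by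
  have key : P0 (m+1) b = ∑ v ∈ Bs m b,
      (X : Polynomial ℕ) ^ wordMaj v * (if wd v (m-1) = true then X ^ m else 1) := by
    rw [P0]
    apply Finset.sum_nbij' (fun w => Fin.init w) (fun v => Fin.snoc v false)
    · intro w hw
      have hw' := snoc_false_eq_self w hw
      rw [Bs0, Finset.mem_filter] at hw
      rw [← snoc_mem_Bs_false (Fin.init w), hw']
      exact hw.1
    · intro v hv
      rw [Bs0, Finset.mem_filter]
      exact ⟨(snoc_mem_Bs_false v).mpr hv, wd_snoc_top v false⟩
    · intro w hw
      exact snoc_false_eq_self w hw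
    · intro v _
      exact Fin.init_snoc _ _
    · intro w hw
      have hw' := snoc_false_eq_self w hw
      conv_lhs => rw [← hw']
      rw [wordMaj_snoc]
      by_cases h : wd (Fin.init w) (m-1) = true <;> simp [h, pow_add]
  rw [key, ← Finset.sum_filter_add_sum_filter_not (Bs m b) (fun w => wd w (m-1) = true)]
  rw [add_comm]
  congr 1
  · -- not true part = P0
    rw [P0, Bs0]
    rw [Finset.sum_congr (Finset.filter_congr (fun w _ => by simp) :
      (Bs m b).filter (fun w => ¬ wd w (m-1) = true) = (Bs m b).filter (fun w => wd w (m-1) = false))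
      (fun _ _ => rfl)]
    apply Finset.sum_congr rfl
    intro w hw
    rw [Finset.mem_filter] at hw
    simp [hw.2]
  · -- true part = X^m * P1
    rw [P1, Bs1, Finset.mul_sum]
    apply Finset.sum_congr rfl
    intro w hw
    rw [Finset.mem_filter] at hw
    simp [hw.2]
    ring

lemma snoc_true_eq_self {m b : ℕ} (w : Fin (m+1) → Bool) (hw : w ∈ Bs1 (m+1) b) :
    Fin.snoc (Fin.init w) true = w := by
  rw [Bs1, Finset.mem_filter] at hw
  have hlast : w (Fin.last m) = true := by
    have h2 : wd w m = true := hw.2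
    rw [wd_lt w m (by omega)] at h2
    exact h2
  rw [← hlast]
  exact Fin.snoc_init_self w

lemma P1_rec (m b : ℕ) (h : 2 * (b+1) ≤ m + 1) :
    P1 (m+1) (b+1) = P0 m b + P1 m b := by
  rw [← sum_Bs_split]
  rw [P1]
  apply Finset.sum_nbij' (fun w => Fin.init w) (fun v => Fin.snoc v true)
  · intro w hw
    have hw' := snoc_true_eq_self w hw
    rw [Bs1, Finset.mem_filter] at hw
    rw [← snoc_mem_Bs_true (Fin.init w) h, hw']
    exact hw.1
  · intro v hv
    rw [Bs1, Finset.mem_filter]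
    exact ⟨(snoc_mem_Bs_true v h).mpr hv, wd_snoc_top v true⟩
  · intro w hw
    exact snoc_true_eq_self w hw
  · intro v _
    exact Fin.init_snoc _ _
  · intro w hw
    have hw' := snoc_true_eq_self w hw
    conv_lhs => rw [← hw']
    rw [wordMaj_snoc]
    simp

lemma Bs1_zero (m : ℕ) : Bs1 m 0 = ∅ := by
  ext w
  rw [Bs1, Finset.mem_filter]
  simp only [Finset.notMem_empty, iff_false]
  rintro ⟨hw, hlast⟩
  rw [mem_Bs_iff] at hw
  rcases m with _ | t
  · rw [wd] at hlast
    simp at hlast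
  · have hl : w ⟨t, by omega⟩ = true := by
      have hx : wd w t = true := hlast
      rwa [wd_lt w t (by omega)] at hx
    have h1 : Cnt true w (t+1) = 0 := hw.1
    rw [Cnt_eq_sum] at h1
    have h2 := Finset.sum_eq_zero_iff.mp h1 ⟨t, by omega⟩ (Finset.mem_univ _)
    simp [hl] at h2

lemma P1_zero (m : ℕ) : P1 m 0 = 0 := by rw [P1, Bs1_zero]; simp

lemma P0_zero_zero : P0 0 0 = 1 := by
  have huniv : Bs0 0 0 = (Finset.univ : Finset (Fin 0 → Bool)) := by
    ext w
    simp only [Bs0, Bs, Finset.mem_filter, Finset.mem_univ, true_and, iff_true]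
    refine ⟨⟨?_, ?_⟩, ?_⟩
    · rw [Cnt_eq_sum]; simp
    · intro k; rw [Cnt_eq_sum, Cnt_eq_sum]; simp
    · rw [wd]; simp
  rw [P0, huniv]
  rw [Finset.univ_unique, Finset.sum_singleton]
  simp [wordMaj]

lemma mainInd (m : ℕ) :
    (∀ b, 2*b ≤ m → P0 m b + P1 m b + X * Dq m b = qBinom m b)
    ∧ (∀ b, 2*(b+1) ≤ m → P1 m (b+1) + X * Dq (m-1) b = qBinom (m-1) b) := by
  induction m with
  | zero =>
    constructor
    · intro b hb
      have hb0 : b = 0 := by omega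
      subst hb0
      rw [P1_zero, P0_zero_zero, Dq_zero, qb_zero]
      ring
    · intro b hb
      omega
  | succ m ih =>
    obtain ⟨H, K⟩ := ih
    have K' : ∀ b, 2*(b+1) ≤ m+1 → P1 (m+1) (b+1) + X * Dq m b = qBinom m b := by
      intro b hb
      rw [P1_rec m b hb]
      exact H b (by omega)
    refine ⟨?_, fun b hb => K' b hb⟩
    intro b hb
    rcases b with _ | c
    · simp only [Dq_zero, P1_zero, qb_zero, mul_zero, add_zero]
      rw [P0_rec, P1_zero, mul_zero, add_zero]
      have h0 := H 0 (by omega)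
      simp only [Dq_zero, P1_zero, mul_zero, add_zero, qb_zero] at h0
      exact h0
    · rcases lt_or_eq_of_le hb with h2 | h2
      · -- 2*(c+1) ≤ m
        have h2' : 2*(c+1) ≤ m := by omega
        obtain ⟨m', rfl⟩ : ∃ m', m = m' + 1 := ⟨m - 1, by omega⟩
        have h1 := H (c+1) h2'
        have hk := K c h2'
        simp only [Nat.add_sub_cancel] at hk
        have h3 := H c (by omega)
        rw [Dq_succ] at h1
        have a1 := absorb1 m' c
        have a2 : qInt c * qBinom (m'+1) c = qInt (m'+1) * Dq m' c := by
          rcases c with _ | e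
          · rw [Dq_zero, qInt_zero]; ring
          · exact absorb1 m' e
        have p1 := qb_succ (m'+1) c
        have p2 := pascalD (m'+1) c
        have g1 := geom (c+1)
        have g2 := geom c
        have g3 := geom (m'+1)
        rw [P0_rec, P1_rec _ _ hb, Dq_succ]
        apply ι_inj
        have h1' := congrArg ι h1
        have hk' := congrArg ι hk
        have h3' := congrArg ι h3
        have a1' := congrArg ι a1
        have a2' := congrArg ι a2
        have p1' := congrArg ι p1
        have p2' := congrArg ι p2
        simp only [ι_add, ι_mul, ι_pow, ι_X] at h1' hk' h3' a1' a2' p1' p2' ⊢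
        linear_combination X * p2' - p1' + h3' + h1' + (X^(m'+1) - 1) * hk'
          - ι (qBinom m' c) * g3 + X * ι (Dq m' c) * g3
          + ι (qBinom (m'+1) (c+1)) * g1 - X * ι (qBinom (m'+1) c) * g2
          - (X-1) * a1' + X * (X-1) * a2'
      · -- 2*(c+1) = m+1
        have hEmpty : Bs m (c+1) = ∅ := Bs_empty (by omega)
        have hP0 : P0 m (c+1) = 0 := by rw [P0, Bs0, hEmpty]; simp
        have hP1 : P1 m (c+1) = 0 := by rw [P1, Bs1, hEmpty]; simp
        have h3 := H c (by omega)
        have hmid : qBinom m c = qBinom m (c+1) := by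
          have hm : m = 2*c+1 := by omega
          rw [hm]
          exact qb_middle c
        have p1 := qb_succ m c
        have p2 := pascalD m c
        rw [P0_rec, P1_rec _ _ hb, hP0, hP1, mul_zero, add_zero, zero_add, Dq_succ]
        apply ι_inj
        have h3' := congrArg ι h3
        have p1' := congrArg ι p1
        have p2' := congrArg ι p2
        have hmid' := congrArg ι hmid
        simp only [ι_add, ι_mul, ι_pow, ι_X] at h3' p1' p2' hmid' ⊢
        linear_combination h3' + X * p2' - p1' + X^(c+1) * hmid'

lemma filter_false_card {m : ℕ} (w : Fin m → Bool) :
    (univ.filter (fun i => w i = false)).card = Cnt false w m := by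
  rw [Cnt]
  congr 1
  apply Finset.filter_congr
  intro i _
  simp [i.is_lt]

open scoped Classical in
/-- `∑_{d ∈ Dyck(n)} q^{maj d} = (1/[n+1]) qbinom(2n, n)`, stated with the
denominator cleared. -/
theorem maj_gen_dyck_eq_qCatalan (n : ℕ) :
    qInt (n + 1) *
      (∑ w ∈ univ.filter (fun w : Fin (2 * n) → Bool => IsDyck n w),
        (X : Polynomial ℕ) ^ wordMaj w) = qBinom (2 * n) n := by
  have hset : (univ.filter (fun w : Fin (2 * n) → Bool => IsDyck n w)) = Bs (2*n) n := by
    ext w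
    simp only [Finset.mem_filter, Finset.mem_univ, true_and, mem_Bs_iff]
    constructor
    · rintro ⟨h1, h2⟩
      rw [filter_false_card] at h1
      have hadd := Cnt_add w
      exact ⟨by omega, h2⟩
    · rintro ⟨h1, h2⟩
      have hadd := Cnt_add w
      refine ⟨?_, h2⟩
      rw [filter_false_card]
      omega
  rw [hset, sum_Bs_split]
  have hH := (mainInd (2*n)).1 n (by omega)
  have hA := absorbC n
  have hS := qInt_succ' n
  apply ι_inj
  have hH' := congrArg ι hH
  have hA' := congrArg ι hA
  have hS' := congrArg ι hS
  simp only [ι_add, ι_mul, ι_pow, ι_X, ι_one] at hH' hA' hS' ⊢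
  linear_combination ι (qInt (n+1)) * hH' - X * hA' + ι (qBinom (2*n) n) * hS'
end
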